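/- arXiv:1501.04043 — 6 statements merged into one kernel-verified Lean document; each statement's English description precedes it below -/
import Mathlib

section
/- If f : A → A is a lattice endomorphism of a lattice (A, ∨, ∧) having a proper cycle, then f has at least two distinct fixed points. -/
theorem stmt1 {A : Type*} [Lattice A] (f : A → A)
    (hsup : ∀ x y : A, f (x ⊔ y) = f x ⊔ f y)
    (hinf : ∀ x y : A, f (x ⊓ y) = f x ⊓ f y)
    (n : ℕ) (hn : 2 ≤ n) (x : Fin n → A) (hinj : Function.Injective x)
    (hcyc : ∀ i : Fin n, f (x i) = x (i + ⟨1, by omega⟩)) :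
    ∃ p q : A, p ≠ q ∧ f p = p ∧ f q = q := by
  have hne : (Finset.univ : Finset (Fin n)).Nonempty := ⟨⟨0, by omega⟩, Finset.mem_univ _⟩
  set p := Finset.univ.sup' hne x with hp
  set q := Finset.univ.inf' hne x with hq
  have hshift : Function.Surjective (fun i : Fin n => i + ⟨1, by omega⟩) := by
    have : NeZero n := ⟨by omega⟩
    intro j; exact ⟨j - ⟨1, by omega⟩, sub_add_cancel j _⟩
  have hfp : f p = p := by
    rw [hp, Finset.comp_sup'_eq_sup'_comp hne f hsup]
    apply le_antisymm
    · apply Finset.sup'_le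
      intro i _
      simp only [Function.comp]
      rw [hcyc i]
      exact Finset.le_sup' x (Finset.mem_univ _)
    · apply Finset.sup'_le
      intro j _
      obtain ⟨i, hi⟩ := hshift j
      calc x j = f (x i) := by rw [hcyc i]; exact (congrArg x hi).symm
        _ ≤ _ := Finset.le_sup' (f ∘ x) (Finset.mem_univ i)
  have hfq : f q = q := by
    rw [hq, Finset.apply_inf'_eq_inf'_comp hne f hinf]
    apply le_antisymm
    · apply Finset.le_inf'
      intro j _
      obtain ⟨i, hi⟩ := hshift j
      calc (Finset.univ.inf' hne (f ∘ x)) ≤ f (x i) :=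
            Finset.inf'_le (f ∘ x) (Finset.mem_univ i)
        _ = x j := by rw [hcyc i]; exact congrArg x hi
    · apply Finset.le_inf'
      intro i _
      simp only [Function.comp]
      rw [hcyc i]
      exact Finset.inf'_le x (Finset.mem_univ _)
  refine ⟨p, q, ?_, hfp, hfq⟩
  intro hpq
  have hall : ∀ i : Fin n, x i = p := by
    intro i
    exact le_antisymm (Finset.le_sup' x (Finset.mem_univ i))
      (hpq.trans_le (Finset.inf'_le x (Finset.mem_univ i)))
  have h01 : (⟨0, by omega⟩ : Fin n) = ⟨1, by omega⟩ :=
    hinj ((hall _).trans (hall _).symm)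
  simp at h01
end

section
/- Let r be a partial order on A and f : A → A order-preserving with respect to r. If (x, y) is an f-prohibited pair, then x and y are incomparable with respect to r. -/
/-- A pair `(x, y)` is `f`-prohibited. -/
def FProhibited {A : Type*} (f : A → A) (x y : A) : Prop :=
  ∃ k l n : ℕ, 2 ≤ n ∧ ¬ ((n : ℤ) ∣ (k : ℤ) - (l : ℤ)) ∧
    (Function.Injective fun i : Fin n => f^[k + (i : ℕ)] x) ∧
    f^[k + n] x = f^[k] x ∧ f^[k] x = f^[l] y

theorem stmt12 {A : Type*} [PartialOrder A] (f : A → A)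
    (hmono : ∀ a b : A, a ≤ b → f a ≤ f b)
    (x y : A) (h : FProhibited f x y) :
    ¬ x ≤ y ∧ ¬ y ≤ x := by
  obtain ⟨k, l, n, hn, hndvd, hinj, hper, heq⟩ := h
  have hn0 : 0 < n := by omega
  have hmono' : ∀ m : ℕ, ∀ a b : A, a ≤ b → f^[m] a ≤ f^[m] b := by
    intro m
    induction m with
    | zero => intro a b hab; simpa using hab
    | succ m ih =>
      intro a b hab
      rw [Function.iterate_succ_apply]
      exact ih _ _ (hmono a b hab)
  -- reduce exponent mod n
  have lemA : ∀ m : ℕ, f^[k + m] x = f^[k + m % n] x := by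
    intro m
    induction m using Nat.strong_induction_on with
    | _ m ih =>
      by_cases hm : m < n
      · rw [Nat.mod_eq_of_lt hm]
      · push_neg at hm
        have h1 : k + m = (m - n) + (k + n) := by omega
        have h2 : f^[k + m] x = f^[k + (m - n)] x := by
          rw [h1, Function.iterate_add_apply, hper, ← Function.iterate_add_apply]
          congr 1
          omega
        rw [h2, ih (m - n) (by omega), Nat.mod_eq_sub_mod hm]
  -- fixed by f^[n]
  have hcyc : ∀ a : ℕ, f^[n] (f^[k + a] x) = f^[k + a] x := by
    intro a
    rw [← Function.iterate_add_apply]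
    have h1 : n + (k + a) = a + (k + n) := by omega
    rw [h1, Function.iterate_add_apply, hper, ← Function.iterate_add_apply]
    congr 1
    omega
  -- on a cycle, u ≤ f^[d] u forces equality
  have core : ∀ (u : A) (d : ℕ), f^[n] u = u → u ≤ f^[d] u → f^[d] u = u := by
    intro u d hu hle
    have step : ∀ j : ℕ, f^[j * d] u ≤ f^[(j + 1) * d] u := by
      intro j
      have h1 := hmono' (j * d) _ _ hle
      rw [← Function.iterate_add_apply] at h1
      calc f^[j * d] u ≤ f^[j * d + d] u := h1
        _ = f^[(j + 1) * d] u := by congr 1; ring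
    have chain : ∀ j : ℕ, f^[d] u ≤ f^[(j + 1) * d] u := by
      intro j
      induction j with
      | zero => simp
      | succ j ih => exact le_trans ih (step (j + 1))
    have hfix : f^[n * d] u = u := by
      rw [Function.iterate_mul]
      exact Function.iterate_fixed hu d
    have hle2 : f^[d] u ≤ u := by
      have h2 := chain (n - 1)
      rwa [show (n - 1 + 1) * d = n * d by rw [Nat.sub_add_cancel hn0], hfix] at h2
    exact le_antisymm hle2 hle
  -- rigidity on the cycle
  have lemB : ∀ a b : ℕ, a < n → b < n → f^[k + a] x ≤ f^[k + b] x → a = b := by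
    intro a b ha hb hle
    rcases Nat.lt_trichotomy a b with hab | hab | hab
    · exfalso
      have hfd : f^[b - a] (f^[k + a] x) = f^[k + b] x := by
        rw [← Function.iterate_add_apply]
        congr 1
        omega
      have h3 := core (f^[k + a] x) (b - a) (hcyc a) (by rw [hfd]; exact hle)
      have heqab : f^[k + b] x = f^[k + a] x := by rw [← hfd, h3]
      have h4 : (⟨b, hb⟩ : Fin n) = ⟨a, ha⟩ := hinj heqab
      have : b = a := by simpa using h4
      omega
    · exact hab
    · exfalso
      have hfd : f^[b + n - a] (f^[k + a] x) = f^[k + b] x := by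
        rw [← Function.iterate_add_apply]
        have h1 : b + n - a + (k + a) = k + (b + n) := by omega
        rw [h1, lemA (b + n)]
        congr 2
        rw [Nat.add_mod_right]
        exact Nat.mod_eq_of_lt hb
      have h3 := core (f^[k + a] x) (b + n - a) (hcyc a) (by rw [hfd]; exact hle)
      have heqab : f^[k + b] x = f^[k + a] x := by rw [← hfd, h3]
      have h4 : (⟨b, hb⟩ : Fin n) = ⟨a, ha⟩ := hinj heqab
      have : b = a := by simpa using h4
      omega
  have gen : ∀ a b : ℕ, f^[k + a] x ≤ f^[k + b] x → a % n = b % n := by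
    intro a b hle
    rw [lemA a, lemA b] at hle
    exact lemB _ _ (Nat.mod_lt _ hn0) (Nat.mod_lt _ hn0) hle
  have h2 : f^[k + l] y = f^[k + k] x := by
    rw [Function.iterate_add_apply, ← heq, ← Function.iterate_add_apply]
  constructor
  · intro hxy
    have h1 : f^[k + l] x ≤ f^[k + l] y := hmono' _ _ _ hxy
    rw [h2] at h1
    have h5 : l % n = k % n := gen l k h1
    exact hndvd (Nat.ModEq.dvd h5)
  · intro hyx
    have h1 : f^[k + l] y ≤ f^[k + l] x := hmono' _ _ _ hyx
    rw [h2] at h1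
    have h5 : k % n = l % n := gen k l h1
    exact hndvd (Nat.ModEq.dvd (h5.symm))
end

section
/- If f : A → A is a function with no proper cycles (i.e., the only cyclic elements of f are fixed points), then there exists a linear order on A with respect to which f is order-preserving; in particular there is a distributive lattice structure on A making f a lattice endomorphism. -/
open Function

namespace Stmt14Aux

variable {A : Type*} (f : A → A)

/-- orbits meet -/
def S (x y : A) : Prop := ∃ m n, f^[m] x = f^[n] y
/-- orbits merge at equal time -/
def Mg (x y : A) : Prop := ∃ n, f^[n] x = f^[n] y
/-- x strictly shallower than y -/
def D (x y : A) : Prop := ∃ m n, m < n ∧ f^[m] x = f^[n] y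

def cl (x : A) : A → Prop := S f x

variable {f}

lemma prop {x : A} {k N : ℕ} {y : A} (e : f^[k] x = f^[k] y) (hk : k ≤ N) :
    f^[N] x = f^[N] y := by
  have : N = (N - k) + k := by omega
  rw [this, Function.iterate_add_apply, Function.iterate_add_apply, e]

lemma S_refl (x : A) : S f x x := ⟨0, 0, rfl⟩
lemma S_symm {x y : A} (hxy : S f x y) : S f y x := by
  obtain ⟨m, n, e⟩ := hxy; exact ⟨n, m, e.symm⟩
lemma S_trans {x y z : A} (hxy : S f x y) (hyz : S f y z) : S f x z := by
  obtain ⟨a, b, e1⟩ := hxy; obtain ⟨c, d, e2⟩ := hyz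
  refine ⟨c + a, b + d, ?_⟩
  rw [Function.iterate_add_apply, Function.iterate_add_apply, e1,
    ← Function.iterate_add_apply, Nat.add_comm c b, Function.iterate_add_apply, e2,
    ← Function.iterate_add_apply]

lemma S_step (x : A) : S f x (f x) := ⟨1, 0, by simp⟩

lemma cl_eq_of_S {x y : A} (hxy : S f x y) : cl f x = cl f y := by
  funext z; exact propext ⟨fun hz => S_trans (S_symm hxy) hz, fun hz => S_trans hxy hz⟩

lemma S_of_cl_eq {x y : A} (e : cl f x = cl f y) : S f x y := by
  have : cl f y y := S_refl y
  rw [← e] at this; exact this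

variable (h : ∀ (x : A) (m : ℕ), 1 ≤ m → f^[m] x = x → f x = x)
include h

lemma absorb {x : A} {a b : ℕ} (e : f^[a] x = f^[b] x) (hab : a < b) :
    ∀ k, a ≤ k → f^[k] x = f^[a] x := by
  have hfix : f (f^[a] x) = f^[a] x := by
    apply h _ (b - a) (by omega)
    rw [← Function.iterate_add_apply]
    rw [show b - a + a = b by omega, e]
  intro k hk
  rw [show k = (k - a) + a by omega, Function.iterate_add_apply,
    Function.iterate_fixed hfix]

lemma mg_of_cycle {x y : A} {a b : ℕ} (e : f^[a] x = f^[b] x) (hab : a < b)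
    (hxy : S f x y) : Mg f x y := by
  obtain ⟨m, n, emn⟩ := hxy
  refine ⟨a + n + m, ?_⟩
  have h1 : f^[a + n + m] x = f^[a] x := absorb h e hab _ (by omega)
  have h2 : f^[a + n + m] y = f^[(a + m) + n] y := by rw [show (a+m)+n = a+n+m by omega]
  rw [h1, h2, Function.iterate_add_apply, ← emn, ← Function.iterate_add_apply]
  exact (absorb h e hab _ (by omega)).symm

lemma delta_eq {x y : A} (hmg : ¬ Mg f x y) {m n p q : ℕ}
    (e1 : f^[m] x = f^[n] y) (e2 : f^[p] x = f^[q] y) : m + q = n + p := by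
  have h1 : f^[q + m] x = f^[q + n] y := by
    rw [Function.iterate_add_apply, Function.iterate_add_apply, e1]
  have h2 : f^[n + p] x = f^[n + q] y := by
    rw [Function.iterate_add_apply, Function.iterate_add_apply, e2]
  have h3 : f^[q + m] x = f^[n + p] x := by
    rw [h1, show q + n = n + q by omega, ← h2]
  by_contra hne
  rcases Nat.lt_or_ge (q + m) (n + p) with hlt | hge
  · exact hmg (mg_of_cycle h h3 hlt ⟨m, n, e1⟩)
  · have : n + p < q + m := by omega
    exact hmg (mg_of_cycle h h3.symm this ⟨m, n, e1⟩)



omit h in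
lemma mg_symm {x y : A} (hxy : Mg f x y) : Mg f y x := by
  obtain ⟨n, e⟩ := hxy; exact ⟨n, e.symm⟩

omit h in
lemma mg_trans {x y z : A} (hxy : Mg f x y) (hyz : Mg f y z) : Mg f x z := by
  obtain ⟨a, e1⟩ := hxy; obtain ⟨b, e2⟩ := hyz
  exact ⟨max a b, (prop e1 (le_max_left a b)).trans (prop e2 (le_max_right a b))⟩

variable (f) in
/-- strict comparison within a class -/
def inLt (x y : A) : Prop :=
  (∃ n, f^[n+1] x = f^[n+1] y ∧ WellOrderingRel (f^[n] x) (f^[n] y)) ∨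
    (¬ Mg f x y ∧ D f x y)

variable (f) in
/-- the global strict order -/
def glt (x y : A) : Prop :=
  (¬ S f x y ∧ WellOrderingRel (cl f x) (cl f y)) ∨ (S f x y ∧ inLt f x y)

lemma inLt_trans {x y z : A} (h1 : inLt f x y) (h2 : inLt f y z) : inLt f x z := by
  rcases h1 with ⟨n1, e1, w1⟩ | ⟨hm1, m, n, hmn, e1⟩ <;>
    rcases h2 with ⟨n2, e2, w2⟩ | ⟨hm2, p, q, hpq, e2⟩
  · -- both merge-comparisons
    rcases lt_trichotomy n1 n2 with hlt | heq | hgt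
    · have ha : f^[n2+1] x = f^[n2+1] y := prop e1 (by omega)
      have hb : f^[n2] x = f^[n2] y := prop e1 (by omega)
      exact Or.inl ⟨n2, ha.trans e2, by rw [hb]; exact w2⟩
    · subst heq
      exact Or.inl ⟨n1, e1.trans e2, _root_.trans_of WellOrderingRel w1 w2⟩
    · have ha : f^[n1+1] y = f^[n1+1] z := prop e2 (by omega)
      have hb : f^[n1] y = f^[n1] z := prop e2 (by omega)
      exact Or.inl ⟨n1, e1.trans ha, by rw [← hb]; exact w1⟩
  · -- merge then depth
    refine Or.inr ⟨?_, p + (n1+1), (n1+1) + q, by omega, ?_⟩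
    · intro hxz
      exact hm2 (mg_trans (mg_symm ⟨n1+1, e1⟩) hxz)
    · calc f^[p + (n1+1)] x = f^[p] (f^[n1+1] x) := Function.iterate_add_apply ..
        _ = f^[p] (f^[n1+1] y) := by rw [e1]
        _ = f^[(n1+1) + p] y := by rw [← Function.iterate_add_apply, Nat.add_comm]
        _ = f^[n1+1] (f^[p] y) := Function.iterate_add_apply ..
        _ = f^[n1+1] (f^[q] z) := by rw [e2]
        _ = f^[(n1+1) + q] z := (Function.iterate_add_apply ..).symm
  · -- depth then merge
    refine Or.inr ⟨?_, (n2+1) + m, n + (n2+1), by omega, ?_⟩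
    · intro hxz
      exact hm1 (mg_trans hxz (mg_symm ⟨n2+1, e2⟩))
    · calc f^[(n2+1) + m] x = f^[n2+1] (f^[m] x) := Function.iterate_add_apply ..
        _ = f^[n2+1] (f^[n] y) := by rw [e1]
        _ = f^[(n2+1) + n] y := (Function.iterate_add_apply ..).symm
        _ = f^[n] (f^[n2+1] y) := by rw [← Function.iterate_add_apply, Nat.add_comm,
            Function.iterate_add_apply]
        _ = f^[n] (f^[n2+1] z) := by rw [e2]
        _ = f^[n + (n2+1)] z := (Function.iterate_add_apply ..).symm
  · -- both depth
    have key : f^[p + m] x = f^[n + q] z := by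
      calc f^[p + m] x = f^[p] (f^[m] x) := Function.iterate_add_apply ..
        _ = f^[p] (f^[n] y) := by rw [e1]
        _ = f^[n + p] y := by rw [← Function.iterate_add_apply, Nat.add_comm]
        _ = f^[n] (f^[p] y) := Function.iterate_add_apply ..
        _ = f^[n] (f^[q] z) := by rw [e2]
        _ = f^[n + q] z := (Function.iterate_add_apply ..).symm
    refine Or.inr ⟨?_, p + m, n + q, by omega, key⟩
    intro ⟨k, e⟩
    -- derive a second witness relating x and y, contradicting delta_eq
    have w2 : f^[q + k] x = f^[k + p] y := by
      calc f^[q + k] x = f^[q] (f^[k] x) := Function.iterate_add_apply ..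
        _ = f^[q] (f^[k] z) := by rw [e]
        _ = f^[q + k] z := (Function.iterate_add_apply ..).symm
        _ = f^[k + q] z := by rw [Nat.add_comm]
        _ = f^[k] (f^[q] z) := Function.iterate_add_apply ..
        _ = f^[k] (f^[p] y) := by rw [e2]
        _ = f^[k + p] y := (Function.iterate_add_apply ..).symm
    have := delta_eq h hm1 e1 w2
    omega

omit h in
lemma glt_irrefl (x : A) : ¬ glt f x x := by
  rintro (⟨hns, _⟩ | ⟨_, hin⟩)
  · exact hns (S_refl x)
  · rcases hin with ⟨n, _, w⟩ | ⟨hm, _, _, _, _⟩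
    · exact _root_.irrefl_of WellOrderingRel _ w
    · exact hm ⟨0, rfl⟩

lemma glt_trans {x y z : A} (h1 : glt f x y) (h2 : glt f y z) : glt f x z := by
  rcases h1 with ⟨hns1, w1⟩ | ⟨hS1, i1⟩ <;> rcases h2 with ⟨hns2, w2⟩ | ⟨hS2, i2⟩
  · refine Or.inl ⟨?_, _root_.trans_of WellOrderingRel w1 w2⟩
    intro hxz
    have : cl f x = cl f z := cl_eq_of_S hxz
    rw [this] at w1
    exact _root_.asymm_of WellOrderingRel w1 w2
  · refine Or.inl ⟨fun hxz => hns1 (S_trans hxz (S_symm hS2)), ?_⟩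
    rw [← cl_eq_of_S hS2]; exact w1
  · refine Or.inl ⟨fun hxz => hns2 (S_trans (S_symm hS1) hxz), ?_⟩
    rw [cl_eq_of_S hS1]; exact w2
  · exact Or.inr ⟨S_trans hS1 hS2, inLt_trans h i1 i2⟩

lemma glt_trich (x y : A) : glt f x y ∨ x = y ∨ glt f y x := by
  classical
  by_cases hS : S f x y
  · by_cases hxy : x = y
    · exact Or.inr (Or.inl hxy)
    by_cases hMg : Mg f x y
    · have ht0 : Nat.find hMg ≠ 0 := by
        intro h0
        have := Nat.find_spec hMg
        rw [h0] at this
        exact hxy this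
      set t := Nat.find hMg with htdef
      have hspec : f^[t] x = f^[t] y := Nat.find_spec hMg
      have hne : f^[t-1] x ≠ f^[t-1] y := Nat.find_min hMg (by omega)
      have hmerge : f^[(t-1)+1] x = f^[(t-1)+1] y := by
        rw [show (t-1)+1 = t by omega]; exact hspec
      rcases _root_.trichotomous_of WellOrderingRel (f^[t-1] x) (f^[t-1] y) with w | e | w
      · exact Or.inl (Or.inr ⟨hS, Or.inl ⟨t-1, hmerge, w⟩⟩)
      · exact absurd e hne
      · exact Or.inr (Or.inr (Or.inr ⟨S_symm hS, Or.inl ⟨t-1, hmerge.symm, w⟩⟩))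
    · obtain ⟨a, b, e⟩ := hS
      have hab : a ≠ b := fun hh => hMg ⟨a, hh ▸ e⟩
      rcases Nat.lt_or_ge a b with hlt | hge
      · exact Or.inl (Or.inr ⟨⟨a, b, e⟩, Or.inr ⟨hMg, a, b, hlt, e⟩⟩)
      · have hba : b < a := by omega
        exact Or.inr (Or.inr (Or.inr ⟨S_symm ⟨a, b, e⟩,
          Or.inr ⟨fun hm => hMg (mg_symm hm), b, a, hba, e.symm⟩⟩))
  · have hcl : cl f x ≠ cl f y := fun e => hS (S_of_cl_eq e)
    rcases _root_.trichotomous_of WellOrderingRel (cl f x) (cl f y) with w | e | w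
    · exact Or.inl (Or.inl ⟨hS, w⟩)
    · exact absurd e hcl
    · exact Or.inr (Or.inr (Or.inl ⟨fun hh => hS (S_symm hh), w⟩))

omit h in
lemma glt_mono {x y : A} (h1 : glt f x y) : f x = f y ∨ glt f (f x) (f y) := by
  have hclx : cl f x = cl f (f x) := cl_eq_of_S (S_step x)
  have hcly : cl f y = cl f (f y) := cl_eq_of_S (S_step y)
  rcases h1 with ⟨hns, wq⟩ | ⟨hS, i⟩
  · refine Or.inr (Or.inl ⟨?_, ?_⟩)
    · intro hS'
      exact hns (S_trans (S_step x) (S_trans hS' (S_symm (S_step y))))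
    · rw [← hclx, ← hcly]; exact wq
  · have hS' : S f (f x) (f y) := S_trans (S_symm (S_step x)) (S_trans hS (S_step y))
    rcases i with ⟨n, e, w⟩ | ⟨hm, m, n, hmn, e⟩
    · match n, e, w with
      | 0, e, w =>
        left
        simpa using e
      | (k+1), e, w =>
        refine Or.inr (Or.inr ⟨hS', Or.inl ⟨k, ?_, ?_⟩⟩)
        · rw [← Function.iterate_succ_apply, ← Function.iterate_succ_apply]
          exact e
        · rw [← Function.iterate_succ_apply, ← Function.iterate_succ_apply]
          exact w
    · refine Or.inr (Or.inr ⟨hS', Or.inr ⟨?_, m, n, hmn, ?_⟩⟩)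
      · intro ⟨k, e'⟩
        refine hm ⟨k+1, ?_⟩
        rw [Function.iterate_succ_apply, Function.iterate_succ_apply]
        exact e'
      · rw [← Function.iterate_succ_apply, ← Function.iterate_succ_apply,
          Function.iterate_succ_apply', Function.iterate_succ_apply', e]

end Stmt14Aux

theorem stmt14 {A : Type*} (f : A → A)
    (h : ∀ (x : A) (m : ℕ), 1 ≤ m → f^[m] x = x → f x = x) :
    (∃ L : LinearOrder A, ∀ x y : A, L.le x y → L.le (f x) (f y)) ∧
    (∃ D : DistribLattice A,
      (∀ x y : A, f (D.sup x y) = D.sup (f x) (f y)) ∧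
      (∀ x y : A, f (D.inf x y) = D.inf (f x) (f y))) := by
  classical
  haveI : IsIrrefl A (Stmt14Aux.glt f) := ⟨Stmt14Aux.glt_irrefl⟩
  haveI : IsTrans A (Stmt14Aux.glt f) := ⟨fun _ _ _ => Stmt14Aux.glt_trans h⟩
  haveI : IsTrichotomous A (Stmt14Aux.glt f) := ⟨fun a b hab hba => by
    rcases Stmt14Aux.glt_trich h a b with w | e | w
    exacts [absurd w hab, e, absurd w hba]⟩
  haveI : IsStrictTotalOrder A (Stmt14Aux.glt f) := { }
  letI L : LinearOrder A := linearOrderOfSTO (Stmt14Aux.glt f)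
  have hmono : ∀ x y : A, L.le x y → L.le (f x) (f y) := by
    intro x y hxy
    rcases (hxy : x = y ∨ Stmt14Aux.glt f x y) with rfl | hlt
    · exact Or.inl rfl
    · exact Stmt14Aux.glt_mono hlt
  letI D : DistribLattice A := inferInstance
  refine ⟨⟨L, hmono⟩, ⟨D, ?_, ?_⟩⟩
  · intro x y
    rcases L.le_total x y with hle | hle
    · have hf := hmono x y hle
      show f (max x y) = max (f x) (f y)
      rw [max_eq_right hle, max_eq_right hf]
    · have hf := hmono y x hle
      show f (max x y) = max (f x) (f y)
      rw [max_eq_left hle, max_eq_left hf]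
  · intro x y
    rcases L.le_total x y with hle | hle
    · have hf := hmono x y hle
      show f (min x y) = min (f x) (f y)
      rw [min_eq_left hle, min_eq_left hf]
    · have hf := hmono y x hle
      show f (min x y) = min (f x) (f y)
      rw [min_eq_right hle, min_eq_right hf]
end

section
/- If f : A → A has at least two distinct fixed points, then there exists a lattice structure (A, ∨, ∧) on A such that f is a lattice endomorphism: f(x ∨ y) = f(x) ∨ f(y) and f(x ∧ y) = f(x) ∧ f(y) for all x, y ∈ A. -/
open Function
open scoped Classical

namespace Stmt15

variable {A : Type*}

section Defs

variable (f : A → A) (p q : A)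

/-- weight making `q` smallest and `p` largest -/
noncomputable def w (a : A) : ℕ := if a = q then 0 else if a = p then 2 else 1

/-- a strict total order on `A` with `q` minimum and `p` maximum -/
noncomputable def pr (a b : A) : Prop :=
  w p q a < w p q b ∨ (w p q a = w p q b ∧ WellOrderingRel a b)

/-- eventual equality under iterates of `f` -/
def sim (x y : A) : Prop := ∃ n, f^[n] x = f^[n] y

/-- within-class strict order: compare at the last level of difference -/
noncomputable def c (x y : A) : Prop :=
  ∃ n, f^[n+1] x = f^[n+1] y ∧ f^[n] x ≠ f^[n] y ∧ pr p q (f^[n] x) (f^[n] y)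

/-- rank: class of q is 0, class of p is 2, others 1 -/
noncomputable def r (x : A) : ℕ :=
  if sim f x q then 0 else if sim f x p then 2 else 1

/-- class order, reversed on ranks 0 and 2 -/
noncomputable def cc (x y : A) : Prop :=
  if r f p q x = 1 then c f p q x y else c f p q y x

noncomputable def le (x y : A) : Prop :=
  x = y ∨ r f p q x < r f p q y ∨ cc f p q x y

noncomputable def sup (x y : A) : A :=
  if le f p q x y then y else if le f p q y x then x else p

noncomputable def inf (x y : A) : A :=
  if le f p q x y then x else if le f p q y x then y else q

end Defs

section Lemmas

variable {f : A → A} {p q : A}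

theorem iter_eq_mono {x y : A} {m n : ℕ} (h : f^[m] x = f^[m] y) (hmn : m ≤ n) :
    f^[n] x = f^[n] y := by
  obtain ⟨k, rfl⟩ := Nat.exists_eq_add_of_le hmn
  rw [Nat.add_comm, Function.iterate_add_apply, Function.iterate_add_apply, h]

-- pr lemmas
theorem pr_trans {a b d : A} (h1 : pr p q a b) (h2 : pr p q b d) : pr p q a d := by
  rcases h1 with h1 | ⟨e1, h1⟩ <;> rcases h2 with h2 | ⟨e2, h2⟩
  · exact Or.inl (h1.trans h2)
  · exact Or.inl (e2 ▸ h1)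
  · exact Or.inl (e1 ▸ h2)
  · exact Or.inr ⟨e1.trans e2, _root_.trans h1 h2⟩

theorem pr_asymm {a b : A} (h1 : pr p q a b) (h2 : pr p q b a) : False := by
  rcases h1 with h1 | ⟨e1, h1⟩ <;> rcases h2 with h2 | ⟨e2, h2⟩
  · omega
  · omega
  · omega
  · exact (irrefl_of WellOrderingRel a) (_root_.trans h1 h2)

theorem pr_total {a b : A} (h : a ≠ b) : pr p q a b ∨ pr p q b a := by
  rcases lt_trichotomy (w p q a) (w p q b) with h1 | h1 | h1
  · exact Or.inl (Or.inl h1)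
  · rcases trichotomous_of WellOrderingRel a b with h2 | h2 | h2
    · exact Or.inl (Or.inr ⟨h1, h2⟩)
    · exact absurd h2 h
    · exact Or.inr (Or.inr ⟨h1.symm, h2⟩)
  · exact Or.inr (Or.inl h1)

theorem w_q : w p q q = 0 := if_pos rfl

theorem w_p (hpq : p ≠ q) : w p q p = 2 := by rw [w, if_neg hpq, if_pos rfl]

theorem w_pos {a : A} (h : a ≠ q) : 0 < w p q a := by
  rw [w, if_neg h]; split <;> omega

theorem w_le {a : A} (h : a ≠ p) : w p q a ≤ 1 := by
  by_cases h1 : a = q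
  · rw [w, if_pos h1]
    omega
  · rw [w, if_neg h1, if_neg h]

theorem pr_q {a : A} (hpq : p ≠ q) (h : a ≠ q) : pr p q q a := by
  left
  rw [w_q]
  exact w_pos h

theorem pr_p {a : A} (hpq : p ≠ q) (h : a ≠ p) : pr p q a p := by
  left
  rw [w_p hpq]
  have := w_le (p := p) (q := q) h
  omega

-- sim lemmas
theorem sim_refl (x : A) : sim f x x := ⟨0, rfl⟩

theorem sim_symm {x y : A} (h : sim f x y) : sim f y x := by
  obtain ⟨n, h⟩ := h; exact ⟨n, h.symm⟩

theorem sim_trans {x y z : A} (h1 : sim f x y) (h2 : sim f y z) : sim f x z := by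
  obtain ⟨n, h1⟩ := h1; obtain ⟨m, h2⟩ := h2
  exact ⟨max n m, (iter_eq_mono h1 (Nat.le_max_left n m)).trans
    (iter_eq_mono h2 (Nat.le_max_right n m))⟩

theorem sim_f {x y : A} (h : sim f x y) : sim f (f x) (f y) := by
  obtain ⟨n, h⟩ := h
  exact ⟨n, by rw [← Function.iterate_succ_apply, ← Function.iterate_succ_apply,
    Function.iterate_succ_apply', Function.iterate_succ_apply', h]⟩

theorem sim_of_sim_f {x y : A} (h : sim f (f x) (f y)) : sim f x y := by
  obtain ⟨n, h⟩ := h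
  exact ⟨n + 1, by rwa [Function.iterate_succ_apply, Function.iterate_succ_apply]⟩

theorem sim_fixed_iff {z a : A} (ha : f a = a) : sim f z a ↔ ∃ n, f^[n] z = a := by
  unfold sim
  simp only [Function.iterate_fixed ha]

theorem sim_fixed_f {x a : A} (ha : f a = a) : sim f (f x) a ↔ sim f x a := by
  rw [sim_fixed_iff ha, sim_fixed_iff ha]
  constructor
  · rintro ⟨n, h⟩
    exact ⟨n + 1, by rw [Function.iterate_succ_apply]; exact h⟩
  · rintro ⟨n, h⟩
    exact ⟨n, by rw [← Function.iterate_succ_apply, Function.iterate_succ_apply', h, ha]⟩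

-- rank lemmas
theorem r_q (hq : f q = q) : r f p q q = 0 := by
  simp [r, sim_refl]

theorem not_sim_pq (hpq : p ≠ q) (hp : f p = p) (hq : f q = q) : ¬ sim f p q := by
  rintro ⟨n, h⟩
  rw [Function.iterate_fixed hp, Function.iterate_fixed hq] at h
  exact hpq h

theorem r_p (hpq : p ≠ q) (hp : f p = p) (hq : f q = q) : r f p q p = 2 := by
  simp [r, sim_refl, not_sim_pq hpq hp hq]

theorem r_eq_of_sim {x y : A} (h : sim f x y) : r f p q x = r f p q y := by
  unfold r
  have h1 : sim f x q ↔ sim f y q := ⟨fun h' => sim_trans (sim_symm h) h',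
    fun h' => sim_trans h h'⟩
  have h2 : sim f x p ↔ sim f y p := ⟨fun h' => sim_trans (sim_symm h) h',
    fun h' => sim_trans h h'⟩
  simp only [h1, h2]

theorem r_f (hp : f p = p) (hq : f q = q) (x : A) : r f p q (f x) = r f p q x := by
  unfold r
  rw [sim_fixed_f hq, sim_fixed_f hp]

theorem r_cases (x : A) : r f p q x = 0 ∨ r f p q x = 1 ∨ r f p q x = 2 := by
  unfold r
  split_ifs <;> simp

theorem r_le_two (x : A) : r f p q x ≤ 2 := by
  unfold r
  split_ifs <;> omega

theorem sim_of_r_zero {x y : A} (hx : r f p q x = 0) (hy : r f p q y = 0) :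
    sim f x y := by
  unfold r at hx hy
  split at hx
  · split at hy
    · exact sim_trans ‹sim f x q› (sim_symm ‹sim f y q›)
    · split at hy <;> omega
  · split at hx <;> omega

theorem sim_of_r_two {x y : A} (hx : r f p q x = 2) (hy : r f p q y = 2) :
    sim f x y := by
  unfold r at hx hy
  split at hx
  · omega
  · split at hx
    · split at hy
      · omega
      · split at hy
        · exact sim_trans ‹sim f x p› (sim_symm ‹sim f y p›)
        · omega
    · omega

theorem sim_p_of_r_two {x : A} (hx : r f p q x = 2) : sim f x p := by
  unfold r at hx
  split at hx
  · omega
  · split at hx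
    · assumption
    · omega

theorem sim_q_of_r_zero {x : A} (hx : r f p q x = 0) : sim f x q := by
  unfold r at hx
  split at hx
  · assumption
  · split at hx <;> omega

-- c lemmas
theorem sim_of_c {x y : A} (h : c f p q x y) : sim f x y := by
  obtain ⟨n, h, _, _⟩ := h; exact ⟨n + 1, h⟩

theorem c_asymm {x y : A} (h1 : c f p q x y) (h2 : c f p q y x) : False := by
  obtain ⟨n, hn1, hn2, hn3⟩ := h1
  obtain ⟨m, hm1, hm2, hm3⟩ := h2
  rcases lt_trichotomy n m with h | h | h
  · exact hm2 (iter_eq_mono hn1 h).symm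
  · subst h
    exact pr_asymm hn3 hm3
  · exact hn2 (iter_eq_mono hm1 h).symm

theorem c_trans {x y z : A} (h1 : c f p q x y) (h2 : c f p q y z) : c f p q x z := by
  obtain ⟨n, hn1, hn2, hn3⟩ := h1
  obtain ⟨m, hm1, hm2, hm3⟩ := h2
  rcases lt_trichotomy n m with h | h | h
  · -- n < m : x and y agree from level n+1 on, so at levels m, m+1
    have e : f^[m] x = f^[m] y := iter_eq_mono hn1 h
    have e1 : f^[m+1] x = f^[m+1] y := iter_eq_mono hn1 (by omega)
    exact ⟨m, e1.trans hm1, by rw [e]; exact hm2, by rw [e]; exact hm3⟩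
  · subst h
    refine ⟨n, hn1.trans hm1, ?_, pr_trans hn3 hm3⟩
    intro hc
    rw [hc] at hn3
    exact pr_asymm hn3 hm3
  · have e : f^[n] y = f^[n] z := iter_eq_mono hm1 h
    have e1 : f^[n+1] y = f^[n+1] z := iter_eq_mono hm1 (by omega)
    exact ⟨n, hn1.trans e1, by rw [← e]; exact hn2, by rw [← e]; exact hn3⟩

theorem c_total {x y : A} (h : sim f x y) (hne : x ≠ y) :
    c f p q x y ∨ c f p q y x := by
  haveI : DecidablePred fun n => f^[n] x = f^[n] y := fun n => Classical.dec _
  have hfind := Nat.find_spec h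
  have hpos : Nat.find h ≠ 0 := by
    intro h0
    rw [h0] at hfind
    exact hne hfind
  obtain ⟨k, hk⟩ : ∃ k, Nat.find h = k + 1 := ⟨Nat.find h - 1, by omega⟩
  have h1 : f^[k+1] x = f^[k+1] y := hk ▸ hfind
  have h2 : f^[k] x ≠ f^[k] y := Nat.find_min h (by omega)
  rcases pr_total (p := p) (q := q) h2 with h3 | h3
  · exact Or.inl ⟨k, h1, h2, h3⟩
  · exact Or.inr ⟨k, h1.symm, fun hc => h2 hc.symm, h3⟩

theorem c_f {x y : A} (h : c f p q x y) : f x = f y ∨ c f p q (f x) (f y) := by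
  obtain ⟨n, hn1, hn2, hn3⟩ := h
  rcases n with _ | k
  · left
    simpa using hn1
  · right
    refine ⟨k, ?_, ?_, ?_⟩
    · rw [← Function.iterate_succ_apply, ← Function.iterate_succ_apply]
      exact hn1
    · rw [← Function.iterate_succ_apply, ← Function.iterate_succ_apply]
      exact hn2
    · rw [← Function.iterate_succ_apply, ← Function.iterate_succ_apply]
      exact hn3

theorem c_q_min (hpq : p ≠ q) (hq : f q = q) {z : A} (h : sim f z q) (hne : z ≠ q) :
    c f p q q z := by
  have h' : ∃ n, f^[n] z = q := by
    obtain ⟨n, hn⟩ := h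
    exact ⟨n, by rwa [Function.iterate_fixed hq] at hn⟩
  haveI : DecidablePred fun n => f^[n] z = q := fun n => Classical.dec _
  have hfind := Nat.find_spec h'
  have hpos : Nat.find h' ≠ 0 := fun h0 => hne (by rw [h0] at hfind; exact hfind)
  obtain ⟨k, hk⟩ : ∃ k, Nat.find h' = k + 1 := ⟨Nat.find h' - 1, by omega⟩
  have h1 : f^[k+1] z = q := hk ▸ hfind
  have h2 : f^[k] z ≠ q := Nat.find_min h' (by omega)
  refine ⟨k, ?_, ?_, ?_⟩
  · rw [Function.iterate_fixed hq, h1]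
  · rw [Function.iterate_fixed hq]; exact fun hc => h2 hc.symm
  · rw [Function.iterate_fixed hq]; exact pr_q hpq h2

theorem c_p_max (hpq : p ≠ q) (hp : f p = p) {z : A} (h : sim f z p) (hne : z ≠ p) :
    c f p q z p := by
  have h' : ∃ n, f^[n] z = p := by
    obtain ⟨n, hn⟩ := h
    exact ⟨n, by rwa [Function.iterate_fixed hp] at hn⟩
  haveI : DecidablePred fun n => f^[n] z = p := fun n => Classical.dec _
  have hfind := Nat.find_spec h'
  have hpos : Nat.find h' ≠ 0 := fun h0 => hne (by rw [h0] at hfind; exact hfind)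
  obtain ⟨k, hk⟩ : ∃ k, Nat.find h' = k + 1 := ⟨Nat.find h' - 1, by omega⟩
  have h1 : f^[k+1] z = p := hk ▸ hfind
  have h2 : f^[k] z ≠ p := Nat.find_min h' (by omega)
  refine ⟨k, ?_, ?_, ?_⟩
  · rw [Function.iterate_fixed hp, h1]
  · rw [Function.iterate_fixed hp]; exact h2
  · rw [Function.iterate_fixed hp]; exact pr_p hpq h2

-- cc lemmas
theorem sim_of_cc {x y : A} (h : cc f p q x y) : sim f x y := by
  unfold cc at h
  split at h
  · exact sim_of_c h
  · exact sim_symm (sim_of_c h)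

theorem cc_asymm {x y : A} (h1 : cc f p q x y) (h2 : cc f p q y x) : False := by
  have hr : r f p q x = r f p q y := r_eq_of_sim (sim_of_cc h1)
  unfold cc at h1 h2
  rw [hr] at h1
  split at h1 <;> [skip; skip] <;> split at h2 <;>
    first
      | exact c_asymm h1 h2
      | omega

theorem cc_trans {x y z : A} (h1 : cc f p q x y) (h2 : cc f p q y z) :
    cc f p q x z := by
  have hr : r f p q x = r f p q y := r_eq_of_sim (sim_of_cc h1)
  unfold cc at *
  rw [hr]
  split at h2
  · rw [if_pos ‹_›]
    rw [hr, if_pos ‹_›] at h1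
    exact c_trans h1 h2
  · rw [if_neg ‹_›]
    rw [hr, if_neg ‹_›] at h1
    exact c_trans h2 h1

theorem cc_total {x y : A} (h : sim f x y) (hne : x ≠ y) :
    cc f p q x y ∨ cc f p q y x := by
  have hr : r f p q x = r f p q y := r_eq_of_sim h
  unfold cc
  rw [hr]
  rcases c_total (p := p) (q := q) h hne with h1 | h1
  · split
    · exact Or.inl h1
    · exact Or.inr h1
  · split
    · exact Or.inr h1
    · exact Or.inl h1

theorem cc_f (hp : f p = p) (hq : f q = q) {x y : A} (h : cc f p q x y) :
    f x = f y ∨ cc f p q (f x) (f y) := by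
  unfold cc at *
  rw [r_f hp hq]
  split at h
  · rw [if_pos ‹_›]
    exact c_f h
  · rw [if_neg ‹_›]
    rcases c_f h with h1 | h1
    · exact Or.inl h1.symm
    · exact Or.inr h1

theorem cc_q_max (hpq : p ≠ q) (hq : f q = q) {z : A} (h : sim f z q) (hne : z ≠ q) :
    cc f p q z q := by
  unfold cc
  have hr : r f p q z = 0 := by simp [r, h]
  rw [if_neg (by omega)]
  exact c_q_min hpq hq h hne

theorem cc_p_min (hpq : p ≠ q) (hp : f p = p) (hq : f q = q) {z : A}
    (h : sim f z p) (hne : z ≠ p) : cc f p q p z := by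
  unfold cc
  rw [r_p hpq hp hq, if_neg (by omega)]
  exact c_p_max hpq hp h hne

-- le lemmas
theorem le_refl' (x : A) : le f p q x x := Or.inl rfl

theorem le_trans' {x y z : A} (h1 : le f p q x y) (h2 : le f p q y z) :
    le f p q x z := by
  rcases h1 with rfl | h1
  · exact h2
  rcases h2 with rfl | h2
  · exact Or.inr h1
  rcases h1 with h1 | h1 <;> rcases h2 with h2 | h2
  · exact Or.inr (Or.inl (h1.trans h2))
  · exact Or.inr (Or.inl (r_eq_of_sim (p := p) (q := q) (sim_of_cc h2) ▸ h1))
  · have := r_eq_of_sim (p := p) (q := q) (sim_of_cc h1)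
    exact Or.inr (Or.inl (this ▸ h2))
  · exact Or.inr (Or.inr (cc_trans h1 h2))

theorem le_antisymm' {x y : A} (h1 : le f p q x y) (h2 : le f p q y x) : x = y := by
  rcases h1 with rfl | h1
  · rfl
  rcases h2 with rfl | h2
  · rfl
  exfalso
  rcases h1 with h1 | h1 <;> rcases h2 with h2 | h2
  · omega
  · have := r_eq_of_sim (p := p) (q := q) (sim_of_cc h2)
    omega
  · have := r_eq_of_sim (p := p) (q := q) (sim_of_cc h1)
    omega
  · exact cc_asymm h1 h2

theorem le_mono (hp : f p = p) (hq : f q = q) {x y : A} (h : le f p q x y) :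
    le f p q (f x) (f y) := by
  rcases h with rfl | h | h
  · exact Or.inl rfl
  · exact Or.inr (Or.inl (by rw [r_f hp hq, r_f hp hq]; exact h))
  · rcases cc_f hp hq h with h1 | h1
    · exact Or.inl h1
    · exact Or.inr (Or.inr h1)

/-- characterization of incomparable pairs -/
theorem incomp (hpq : p ≠ q) (hp : f p = p) (hq : f q = q) {x y : A}
    (h1 : ¬ le f p q x y) (h2 : ¬ le f p q y x) :
    r f p q x = 1 ∧ r f p q y = 1 ∧ ¬ sim f x y := by
  have hne : x ≠ y := fun h => h1 (h ▸ le_refl' x)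
  have hsim : ¬ sim f x y := by
    intro hs
    rcases cc_total (p := p) (q := q) hs hne with h | h
    · exact h1 (Or.inr (Or.inr h))
    · exact h2 (Or.inr (Or.inr h))
  have hr : r f p q x = r f p q y := by
    rcases lt_trichotomy (r f p q x) (r f p q y) with h | h | h
    · exact absurd (Or.inr (Or.inl h)) h1
    · exact h
    · exact absurd (Or.inr (Or.inl h)) h2
  have hx1 : r f p q x = 1 := by
    rcases r_cases (f := f) (p := p) (q := q) x with h0 | h1 | h2
    · exact absurd (sim_of_r_zero h0 (hr.symm.trans h0)) hsim
    · exact h1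
    · exact absurd (sim_of_r_two h2 (hr.symm.trans h2)) hsim
  exact ⟨hx1, hr ▸ hx1, hsim⟩

end Lemmas

section Lat

variable (f : A → A) (p q : A) (hpq : p ≠ q) (hp : f p = p) (hq : f q = q)

noncomputable def lat : Lattice A where
  le := le f p q
  sup := sup f p q
  inf := inf f p q
  le_refl := le_refl'
  le_trans := fun _ _ _ => le_trans'
  le_antisymm := fun _ _ => le_antisymm'
  le_sup_left := by
    intro x y
    unfold sup
    split
    · assumption
    · split
      · exact le_refl' x
      · -- incomparable: x has rank 1 < 2 = r p
        have h := incomp hpq hp hq ‹¬ le f p q x y› ‹¬ le f p q y x›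
        exact Or.inr (Or.inl (by rw [h.1, r_p hpq hp hq]; omega))
  le_sup_right := by
    intro x y
    unfold sup
    split
    · exact le_refl' y
    · split
      · assumption
      · have h := incomp hpq hp hq ‹¬ le f p q x y› ‹¬ le f p q y x›
        exact Or.inr (Or.inl (by rw [h.2.1, r_p hpq hp hq]; omega))
  sup_le := by
    intro x y z hxz hyz
    unfold sup
    split
    · exact hyz
    · split
      · exact hxz
      · -- incomparable: any common upper bound z has rank 2, and p ≤ z
        rename_i hnxy hnyx
        obtain ⟨hx1, hy1, hsim⟩ := incomp hpq hp hq hnxy hnyx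
        have hb := r_le_two (f := f) (p := p) (q := q) z
        have hz2 : r f p q z = 2 := by
          rcases hxz with hxz | hxz | hxz
          · subst hxz
            exact absurd hyz hnyx
          · omega
          · have hsxz : sim f x z := sim_of_cc hxz
            rcases hyz with hyz | hyz | hyz
            · subst hyz
              exact absurd (Or.inr (Or.inr hxz)) hnxy
            · have := r_eq_of_sim (p := p) (q := q) hsxz
              omega
            · exact absurd (sim_trans hsxz (sim_symm (sim_of_cc hyz))) hsim
        rcases eq_or_ne z p with hzp | hzp
        · rw [hzp]
          exact le_refl' p
        · exact Or.inr (Or.inr (cc_p_min hpq hp hq (sim_of_r_two hz2 (r_p hpq hp hq)) hzp))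
  inf_le_left := by
    intro x y
    unfold inf
    split
    · exact le_refl' x
    · split
      · assumption
      · have h := incomp hpq hp hq ‹¬ le f p q x y› ‹¬ le f p q y x›
        exact Or.inr (Or.inl (by rw [h.1, r_q hq]; omega))
  inf_le_right := by
    intro x y
    unfold inf
    split
    · assumption
    · split
      · exact le_refl' y
      · have h := incomp hpq hp hq ‹¬ le f p q x y› ‹¬ le f p q y x›
        exact Or.inr (Or.inl (by rw [h.2.1, r_q hq]; omega))
  le_inf := by
    intro z x y hzx hzy
    unfold inf
    split
    · exact hzx
    · split
      · exact hzy
      · rename_i hnxy hnyx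
        obtain ⟨hx1, hy1, hsim⟩ := incomp hpq hp hq hnxy hnyx
        have hz0 : r f p q z = 0 := by
          rcases hzx with hzx | hzx | hzx
          · subst hzx
            exact absurd hzy hnxy
          · rcases hzy with hzy | hzy | hzy
            · subst hzy
              exact absurd (Or.inr (Or.inl hzx)) hnyx
            · omega
            · have := r_eq_of_sim (p := p) (q := q) (sim_of_cc hzy)
              omega
          · have hsxz : sim f z x := sim_of_cc hzx
            rcases hzy with hzy | hzy | hzy
            · subst hzy
              exact absurd (Or.inr (Or.inr hzx)) hnyx
            · have := r_eq_of_sim (p := p) (q := q) hsxz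
              omega
            · exact absurd (sim_trans (sim_symm hsxz) (sim_of_cc hzy)) hsim
        rcases eq_or_ne z q with hzq | hzq
        · rw [hzq]
          exact le_refl' q
        · exact Or.inr (Or.inr (cc_q_max hpq hq (sim_of_r_zero hz0 (r_q hq)) hzq))

theorem f_sup (hpq : p ≠ q) (hp : f p = p) (hq : f q = q) (x y : A) :
    f (sup f p q x y) = sup f p q (f x) (f y) := by
  unfold sup
  by_cases h1 : le f p q x y
  · rw [if_pos h1, if_pos (le_mono hp hq h1)]
  · rw [if_neg h1]
    by_cases h2 : le f p q y x
    · rw [if_pos h2]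
      have h := le_mono hp hq h2
      by_cases h3 : le f p q (f x) (f y)
      · rw [if_pos h3]
        exact le_antisymm' h3 h
      · rw [if_neg h3, if_pos h]
    · rw [if_neg h2]
      obtain ⟨hx1, hy1, hsim⟩ := incomp hpq hp hq h1 h2
      have hfsim : ¬ sim f (f x) (f y) := fun h => hsim (sim_of_sim_f h)
      have hf1 : ¬ le f p q (f x) (f y) := by
        rintro (h | h | h)
        · exact hfsim (h ▸ sim_refl (f x))
        · rw [r_f hp hq, r_f hp hq, hx1, hy1] at h
          omega
        · exact hfsim (sim_of_cc h)
      have hf2 : ¬ le f p q (f y) (f x) := by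
        rintro (h | h | h)
        · exact hfsim (h ▸ sim_refl (f y))
        · rw [r_f hp hq, r_f hp hq, hx1, hy1] at h
          omega
        · exact hfsim (sim_symm (sim_of_cc h))
      rw [if_neg hf1, if_neg hf2]
      exact hp

theorem f_inf (hpq : p ≠ q) (hp : f p = p) (hq : f q = q) (x y : A) :
    f (inf f p q x y) = inf f p q (f x) (f y) := by
  unfold inf
  by_cases h1 : le f p q x y
  · rw [if_pos h1, if_pos (le_mono hp hq h1)]
  · rw [if_neg h1]
    by_cases h2 : le f p q y x
    · rw [if_pos h2]
      have h := le_mono hp hq h2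
      by_cases h3 : le f p q (f x) (f y)
      · rw [if_pos h3]
        exact le_antisymm' h h3
      · rw [if_neg h3, if_pos h]
    · rw [if_neg h2]
      obtain ⟨hx1, hy1, hsim⟩ := incomp hpq hp hq h1 h2
      have hfsim : ¬ sim f (f x) (f y) := fun h => hsim (sim_of_sim_f h)
      have hf1 : ¬ le f p q (f x) (f y) := by
        rintro (h | h | h)
        · exact hfsim (h ▸ sim_refl (f x))
        · rw [r_f hp hq, r_f hp hq, hx1, hy1] at h
          omega
        · exact hfsim (sim_of_cc h)
      have hf2 : ¬ le f p q (f y) (f x) := by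
        rintro (h | h | h)
        · exact hfsim (h ▸ sim_refl (f y))
        · rw [r_f hp hq, r_f hp hq, hx1, hy1] at h
          omega
        · exact hfsim (sim_symm (sim_of_cc h))
      rw [if_neg hf1, if_neg hf2]
      exact hq

end Lat

end Stmt15

theorem stmt15 {A : Type*} (f : A → A) (p q : A)
    (hpq : p ≠ q) (hp : f p = p) (hq : f q = q) :
    ∃ L : Lattice A,
      (∀ x y : A, f (L.sup x y) = L.sup (f x) (f y)) ∧
      (∀ x y : A, f (L.inf x y) = L.inf (f x) (f y)) := by
  refine ⟨Stmt15.lat f p q hpq hp hq, ?_, ?_⟩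
  · exact Stmt15.f_sup f p q hpq hp hq
  · exact Stmt15.f_inf f p q hpq hp hq
end

section
/- For a function f : A → A, there exists a lattice structure on A making f a lattice endomorphism if and only if f has no proper cycles or f has at least two fixed points. -/
open Function Classical

namespace Stmt16Aux
variable {A : Type*}

/-- eventually equal under f -/
def E (f : A → A) (x y : A) : Prop := ∃ n, f^[n] x = f^[n] y

lemma E_refl (f : A → A) (x : A) : E f x x := ⟨0, rfl⟩

lemma E_symm {f : A → A} {x y : A} (h : E f x y) : E f y x := by
  obtain ⟨n, hn⟩ := h; exact ⟨n, hn.symm⟩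

lemma iter_stable {f : A → A} {x y : A} {n m : ℕ} (h : f^[n] x = f^[n] y) (hnm : n ≤ m) :
    f^[m] x = f^[m] y := by
  obtain ⟨k, rfl⟩ := Nat.exists_eq_add_of_le hnm
  rw [Nat.add_comm, Function.iterate_add_apply, Function.iterate_add_apply, h]

lemma E_trans {f : A → A} {x y z : A} (h1 : E f x y) (h2 : E f y z) : E f x z := by
  obtain ⟨n, hn⟩ := h1; obtain ⟨m, hm⟩ := h2
  exact ⟨max n m, (iter_stable hn (le_max_left n m)).trans (iter_stable hm (le_max_right n m))⟩

lemma E_step {f : A → A} {x y : A} (h : E f x y) : E f (f x) (f y) := by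
  obtain ⟨n, hn⟩ := h
  exact ⟨n, by simpa [← Function.iterate_succ_apply, Function.iterate_succ_apply'] using congrArg f hn⟩

lemma E_unstep {f : A → A} {x y : A} (h : E f (f x) (f y)) : E f x y := by
  obtain ⟨n, hn⟩ := h
  exact ⟨n + 1, by simpa [Function.iterate_succ_apply] using hn⟩

lemma E_iter_self (f : A → A) (x : A) {p : A} (hp : f p = p) (h : E f x p) : ∃ n, f^[n] x = p := by
  obtain ⟨n, hn⟩ := h
  exact ⟨n, by rwa [Function.iterate_fixed hp] at hn⟩

lemma E_of_iter_eq {f : A → A} {x : A} {p : A} (hp : f p = p) {n : ℕ} (h : f^[n] x = p) : E f x p :=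
  ⟨n, by rw [h, Function.iterate_fixed hp]⟩

/-- first time the orbits agree -/
noncomputable def NE (f : A → A) (x y : A) : ℕ :=
  if h : E f x y then Nat.find h else 0

lemma NE_spec {f : A → A} {x y : A} (h : E f x y) : f^[NE f x y] x = f^[NE f x y] y := by
  rw [NE, dif_pos h]; exact Nat.find_spec h

lemma NE_min {f : A → A} {x y : A} (h : E f x y) {n : ℕ} (hn : f^[n] x = f^[n] y) :
    NE f x y ≤ n := by
  rw [NE, dif_pos h]; exact Nat.find_min' h hn

lemma NE_symm (f : A → A) (x y : A) : NE f x y = NE f y x := by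
  by_cases h : E f x y
  · exact le_antisymm (NE_min h (NE_spec (E_symm h)).symm) (NE_min (E_symm h) (NE_spec h).symm)
  · rw [NE, dif_neg h, NE, dif_neg (fun h' => h (E_symm h'))]

/-- last time the orbits differ -/
noncomputable def K (f : A → A) (x y : A) : ℕ := NE f x y - 1

lemma K_symm (f : A → A) (x y : A) : K f x y = K f y x := by rw [K, K, NE_symm]

lemma NE_pos {f : A → A} {x y : A} (h : E f x y) (hxy : x ≠ y) : 1 ≤ NE f x y := by
  rcases Nat.eq_zero_or_pos (NE f x y) with h0 | h1
  · exact absurd (by simpa [h0] using NE_spec h) hxy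
  · exact h1

lemma K_ne {f : A → A} {x y : A} (h : E f x y) (hxy : x ≠ y) :
    f^[K f x y] x ≠ f^[K f x y] y := by
  intro heq
  have h1 := NE_pos h hxy
  have h2 := NE_min h heq
  unfold K at h2
  omega

lemma K_gt {f : A → A} {x y : A} (h : E f x y) {j : ℕ} (hj : K f x y < j) :
    f^[j] x = f^[j] y := by
  refine iter_stable (NE_spec h) ?_
  by_cases hxy : x = y
  · subst hxy; exact le_of_lt (lt_of_le_of_lt (by calc NE f x x ≤ 0 := NE_min h rfl
      _ ≤ K f x x := Nat.zero_le _) hj)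
  · have := NE_pos h hxy; unfold K at hj; omega

lemma K_unique {f : A → A} {x y : A} (h : E f x y) {c : ℕ}
    (hne : f^[c] x ≠ f^[c] y) (hgt : ∀ j, c < j → f^[j] x = f^[j] y) : K f x y = c := by
  have h1 : NE f x y ≤ c + 1 := NE_min h (hgt (c+1) (Nat.lt_succ_self c))
  have h2 : c + 1 ≤ NE f x y := by
    by_contra hc
    exact hne (iter_stable (NE_spec h) (by omega))
  unfold K; omega


section Sigma
variable [LinearOrder A] {f : A → A} {x y z : A}

/-- strict order within an E-class: compare at the last time of difference -/
def Clt (f : A → A) (x y : A) : Prop :=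
  E f x y ∧ x ≠ y ∧ f^[K f x y] x < f^[K f x y] y

def Cle (f : A → A) (x y : A) : Prop := x = y ∨ Clt f x y

lemma Clt_E (h : Clt f x y) : E f x y := h.1

lemma Cle_refl (f : A → A) (x : A) : Cle f x x := Or.inl rfl

lemma Cle_E (h : Cle f x y) : E f x y := by
  rcases h with rfl | h
  · exact E_refl f x
  · exact h.1

lemma Clt_asymm (h : Clt f x y) (h' : Clt f y x) : False := by
  obtain ⟨hE, hne, hlt⟩ := h
  obtain ⟨hE', hne', hlt'⟩ := h'
  rw [K_symm] at hlt'
  exact absurd hlt' (not_lt.mpr hlt.le)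

lemma Clt_total (hE : E f x y) (hne : x ≠ y) : Clt f x y ∨ Clt f y x := by
  rcases lt_trichotomy (f^[K f x y] x) (f^[K f x y] y) with h | h | h
  · exact Or.inl ⟨hE, hne, h⟩
  · exact absurd h (K_ne hE hne)
  · exact Or.inr ⟨E_symm hE, hne.symm, by rwa [K_symm]⟩

lemma Clt_trans (h1 : Clt f x y) (h2 : Clt f y z) : Clt f x z := by
  obtain ⟨hExy, hnxy, hlt1⟩ := h1
  obtain ⟨hEyz, hnyz, hlt2⟩ := h2
  have hExz : E f x z := E_trans hExy hEyz
  set a := K f x y with ha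
  set b := K f y z with hb
  have hxz : x ≠ z := by
    rintro rfl
    exact Clt_asymm ⟨hExy, hnxy, hlt1⟩ ⟨hEyz, hnyz, hlt2⟩
  rcases lt_trichotomy a b with hab | hab | hab
  · -- K x z = b, and f^[b] x = f^[b] y
    have hxb : f^[b] x = f^[b] y := K_gt hExy hab
    have hne : f^[b] x ≠ f^[b] z := by rw [hxb]; exact K_ne hEyz hnyz
    have hgt : ∀ j, b < j → f^[j] x = f^[j] z := fun j hj =>
      (K_gt hExy (hab.trans hj)).trans (K_gt hEyz hj)
    have hK : K f x z = b := K_unique hExz hne hgt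
    exact ⟨hExz, hxz, by rw [hK, hxb]; exact hlt2⟩
  · -- a = b
    rw [← hab] at hlt2
    have hne : f^[a] x ≠ f^[a] z := by
      intro hc
      rw [hc] at hlt1
      exact absurd hlt2 (not_lt.mpr hlt1.le)
    have hgt : ∀ j, a < j → f^[j] x = f^[j] z := fun j hj =>
      (K_gt hExy hj).trans (K_gt hEyz (by rw [← hb, ← hab]; exact hj))
    have hK : K f x z = a := K_unique hExz hne hgt
    exact ⟨hExz, hxz, by rw [hK]; exact hlt1.trans hlt2⟩
  · -- b < a, K x z = a, f^[a] y = f^[a] z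
    have hyb : f^[a] y = f^[a] z := K_gt hEyz hab
    have hne : f^[a] x ≠ f^[a] z := by rw [← hyb]; exact K_ne hExy hnxy
    have hgt : ∀ j, a < j → f^[j] x = f^[j] z := fun j hj =>
      (K_gt hExy hj).trans (K_gt hEyz (hab.trans hj))
    have hK : K f x z = a := K_unique hExz hne hgt
    exact ⟨hExz, hxz, by rw [hK, ← hyb]; exact hlt1⟩

lemma Clt_step (h : Clt f x y) : f x = f y ∨ Clt f (f x) (f y) := by
  obtain ⟨hE, hne, hlt⟩ := h
  by_cases hf : f x = f y
  · exact Or.inl hf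
  · right
    have hE' : E f (f x) (f y) := E_step hE
    have hK1 : 1 ≤ K f x y := by
      rcases Nat.eq_zero_or_pos (K f x y) with h0 | h1
      · exact absurd ((by simpa [Function.iterate_one] using K_gt hE (by omega : K f x y < 1))) hf
      · exact h1
    have hc1 : f^[K f x y - 1] (f x) = f^[K f x y] x := by
      rw [← Function.iterate_succ_apply]; congr 1; omega
    have hc2 : f^[K f x y - 1] (f y) = f^[K f x y] y := by
      rw [← Function.iterate_succ_apply]; congr 1; omega
    have hne' : f^[K f x y - 1] (f x) ≠ f^[K f x y - 1] (f y) := by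
      rw [hc1, hc2]; exact K_ne hE hne
    have hgt : ∀ j, K f x y - 1 < j → f^[j] (f x) = f^[j] (f y) := by
      intro j hj
      rw [← Function.iterate_succ_apply, ← Function.iterate_succ_apply]
      exact K_gt hE (by omega)
    have hK : K f (f x) (f y) = K f x y - 1 := K_unique hE' hne' hgt
    exact ⟨hE', hf, by rw [hK, hc1, hc2]; exact hlt⟩

lemma Cle_antisymm (h1 : Cle f x y) (h2 : Cle f y x) : x = y := by
  rcases h1 with rfl | h1
  · rfl
  · rcases h2 with rfl | h2
    · rfl
    · exact absurd h2 (fun h2 => Clt_asymm h1 h2)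

lemma Cle_trans (h1 : Cle f x y) (h2 : Cle f y z) : Cle f x z := by
  rcases h1 with rfl | h1
  · exact h2
  · rcases h2 with rfl | h2
    · exact Or.inr h1
    · exact Or.inr (Clt_trans h1 h2)

lemma Cle_total (hE : E f x y) : Cle f x y ∨ Cle f y x := by
  by_cases hne : x = y
  · exact Or.inl (Or.inl hne)
  · exact (Clt_total hE hne).imp Or.inr Or.inr

lemma Cle_step (h : Cle f x y) : Cle f (f x) (f y) := by
  rcases h with rfl | h
  · exact Cle_refl f (f x)
  · exact (Clt_step h).imp id id

end Sigma

section Two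
variable [LinearOrder A] {f : A → A} {p q : A}

/-- order for the case of two fixed points: [p]-class at bottom (p on top of it),
[q]-class on top (q at bottom of it), all other classes side by side chains -/
def le2 (f : A → A) (p q : A) (x y : A) : Prop :=
  Cle f x y ∨ (E f x p ∧ ¬ E f y p) ∨ (E f y q ∧ ¬ E f x q)

lemma E_fix_step {z : A} (hp : f p = p) (h : E f z p) : E f (f z) p := by
  have := E_step h; rwa [hp] at this

lemma E_fix_unstep {z : A} (hp : f p = p) (h : E f (f z) p) : E f z p := by
  apply E_unstep; rwa [hp]

lemma le2_refl (x : A) : le2 f p q x x := Or.inl (Cle_refl f x)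

lemma le2_antisymm (hpq : ¬ E f p q) {x y : A}
    (h1 : le2 f p q x y) (h2 : le2 f p q y x) : x = y := by
  rcases h1 with h1 | ⟨hxp, hyp⟩ | ⟨hyq, hxq⟩
  · rcases h2 with h2 | ⟨hyp2, hxp2⟩ | ⟨hxq2, hyq2⟩
    · exact Cle_antisymm h1 h2
    · exact absurd (E_trans (Cle_E h1) hyp2) hxp2
    · exact absurd (E_trans (E_symm (Cle_E h1)) hxq2) hyq2
  · rcases h2 with h2 | ⟨hyp2, hxp2⟩ | ⟨hxq2, hyq2⟩
    · exact absurd (E_trans (Cle_E h2) hxp) hyp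
    · exact absurd hyp2 hyp
    · exact absurd (E_trans (E_symm hxp) hxq2) hpq
  · rcases h2 with h2 | ⟨hyp2, hxp2⟩ | ⟨hxq2, hyq2⟩
    · exact absurd (E_trans (E_symm (Cle_E h2)) hyq) hxq
    · exact absurd (E_trans (E_symm hyp2) hyq) hpq
    · exact absurd hxq2 hxq

lemma le2_trans (hpq : ¬ E f p q) {x y z : A} (h1 : le2 f p q x y) (h2 : le2 f p q y z) : le2 f p q x z := by
  rcases h1 with h1 | ⟨hxp, hyp⟩ | ⟨hyq, hxq⟩
  · rcases h2 with h2 | ⟨hyp, hzp⟩ | ⟨hzq, hyq⟩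
    · exact Or.inl (Cle_trans h1 h2)
    · exact Or.inr (Or.inl ⟨E_trans (Cle_E h1) hyp, hzp⟩)
    · exact Or.inr (Or.inr ⟨hzq, fun h => hyq (E_trans (E_symm (Cle_E h1)) h)⟩)
  · rcases h2 with h2 | ⟨hyp', hzp⟩ | ⟨hzq, hyq⟩
    · exact Or.inr (Or.inl ⟨hxp, fun h => hyp (E_trans (Cle_E h2) h)⟩)
    · exact absurd hyp' hyp
    · exact Or.inr (Or.inl ⟨hxp, fun h => hpq (E_trans (E_symm h) hzq)⟩)
  · rcases h2 with h2 | ⟨hyp, hzp⟩ | ⟨hzq, hyq'⟩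
    · exact Or.inr (Or.inr ⟨E_trans (E_symm (Cle_E h2)) hyq, hxq⟩)
    · exact absurd (E_trans (E_symm hyp) hyq) hpq
    · exact absurd hyq hyq'

lemma le2_mono (hp : f p = p) (hq : f q = q) {x y : A} (h : le2 f p q x y) : le2 f p q (f x) (f y) := by
  rcases h with h | ⟨hxp, hyp⟩ | ⟨hyq, hxq⟩
  · exact Or.inl (Cle_step h)
  · exact Or.inr (Or.inl ⟨E_fix_step hp hxp, fun h => hyp (E_fix_unstep hp h)⟩)
  · exact Or.inr (Or.inr ⟨E_fix_step hq hyq, fun h => hxq (E_fix_unstep hq h)⟩)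

lemma le2_total_of_E {x y : A} (hE : E f x y) : le2 f p q x y ∨ le2 f p q y x :=
  (Cle_total hE).imp Or.inl Or.inl

lemma q_le2 (hq : f q = q) (hqmin : ∀ z, z ≠ q → q < z) {z : A} (hE : E f z q) :
    le2 f p q q z := by
  by_cases hzq : z = q
  · subst hzq; exact le2_refl z
  · refine Or.inl (Or.inr ⟨E_symm hE, fun h => hzq h.symm, ?_⟩)
    have h1 : f^[K f q z] q = q := Function.iterate_fixed hq _
    have h2 : f^[K f q z] q ≠ f^[K f q z] z := K_ne (E_symm hE) (fun h => hzq h.symm)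
    rw [h1] at h2 ⊢
    exact hqmin _ (fun h => h2 h.symm)

lemma le2_p (hp : f p = p) (hpmax : ∀ z, z ≠ p → z < p) {z : A} (hE : E f z p) :
    le2 f p q z p := by
  by_cases hzp : z = p
  · subst hzp; exact le2_refl z
  · refine Or.inl (Or.inr ⟨hE, hzp, ?_⟩)
    have h1 : f^[K f z p] p = p := Function.iterate_fixed hp _
    have h2 : f^[K f z p] z ≠ f^[K f z p] p := K_ne hE hzp
    rw [h1] at h2 ⊢
    exact hpmax _ h2

lemma le2_q_top {x : A} (hx : ¬ E f x q) : le2 f p q x q :=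
  Or.inr (Or.inr ⟨E_refl f q, hx⟩)

lemma p_le2_bot {x : A} (hx : ¬ E f x p) : le2 f p q p x :=
  Or.inr (Or.inl ⟨E_refl f p, hx⟩)

lemma incomp2 {x y : A} (h1 : ¬ le2 f p q x y) (h2 : ¬ le2 f p q y x) :
    ¬ E f x y ∧ ¬ E f x p ∧ ¬ E f y p ∧ ¬ E f x q ∧ ¬ E f y q := by
  have hExy : ¬ E f x y := by
    intro hE
    rcases le2_total_of_E (p := p) (q := q) hE with h | h
    · exact h1 h
    · exact h2 h
  refine ⟨hExy, ?_, ?_, ?_, ?_⟩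
  · intro hxp
    by_cases hyp : E f y p
    · exact hExy (E_trans hxp (E_symm hyp))
    · exact h1 (Or.inr (Or.inl ⟨hxp, hyp⟩))
  · intro hyp
    by_cases hxp : E f x p
    · exact hExy (E_trans hxp (E_symm hyp))
    · exact h2 (Or.inr (Or.inl ⟨hyp, hxp⟩))
  · intro hxq
    by_cases hyq : E f y q
    · exact hExy (E_trans hxq (E_symm hyq))
    · exact h2 (Or.inr (Or.inr ⟨hxq, hyq⟩))
  · intro hyq
    by_cases hxq : E f x q
    · exact hExy (E_trans hxq (E_symm hyq))
    · exact h1 (Or.inr (Or.inr ⟨hyq, hxq⟩))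

lemma ub2 {x z : A} (hxz : le2 f p q x z) (hnE : ¬ E f x z) (hnp : ¬ E f x p) : E f z q := by
  rcases hxz with h | ⟨hxp, _⟩ | ⟨hzq, _⟩
  · exact absurd (Cle_E h) hnE
  · exact absurd hxp hnp
  · exact hzq

lemma lb2 {x z : A} (hzx : le2 f p q z x) (hnE : ¬ E f z x) (hnq : ¬ E f x q) : E f z p := by
  rcases hzx with h | ⟨hzp, _⟩ | ⟨hxq, _⟩
  · exact absurd (Cle_E h) hnE
  · exact hzp
  · exact absurd hxq hnq

open Classical in
noncomputable def sup2 (f : A → A) (p q x y : A) : A :=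
  if le2 f p q x y then y else if le2 f p q y x then x else q

open Classical in
noncomputable def inf2 (f : A → A) (p q x y : A) : A :=
  if le2 f p q x y then x else if le2 f p q y x then y else p

variable (hp : f p = p) (hq : f q = q) (hpq : ¬ E f p q)
    (hqmin : ∀ z, z ≠ q → q < z) (hpmax : ∀ z, z ≠ p → z < p)

section
include hq hqmin

lemma le_sup2_left (x y : A) : le2 f p q x (sup2 f p q x y) := by
  classical
  unfold sup2
  by_cases h1 : le2 f p q x y
  · rwa [if_pos h1]
  by_cases h2 : le2 f p q y x
  · rw [if_neg h1, if_pos h2]; exact le2_refl x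
  · rw [if_neg h1, if_neg h2]; exact le2_q_top (incomp2 h1 h2).2.2.2.1

lemma le_sup2_right (x y : A) : le2 f p q y (sup2 f p q x y) := by
  classical
  unfold sup2
  by_cases h1 : le2 f p q x y
  · rw [if_pos h1]; exact le2_refl y
  by_cases h2 : le2 f p q y x
  · rwa [if_neg h1, if_pos h2]
  · rw [if_neg h1, if_neg h2]; exact le2_q_top (incomp2 h1 h2).2.2.2.2

lemma sup2_le {x y z : A} (hxz : le2 f p q x z) (hyz : le2 f p q y z) :
    le2 f p q (sup2 f p q x y) z := by
  classical
  unfold sup2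
  by_cases h1 : le2 f p q x y
  · rwa [if_pos h1]
  by_cases h2 : le2 f p q y x
  · rwa [if_neg h1, if_pos h2]
  · rw [if_neg h1, if_neg h2]
    obtain ⟨hExy, hxp, hyp, hxq, hyq⟩ := incomp2 h1 h2
    have hzq : E f z q := by
      by_cases hxz' : E f x z
      · have hyz' : ¬ E f y z := fun h => hExy (E_trans hxz' (E_symm h))
        exact ub2 hyz hyz' hyp
      · exact ub2 hxz hxz' hxp
    exact q_le2 hq hqmin hzq

end

section
include hp hpmax

lemma inf2_le_left (x y : A) : le2 f p q (inf2 f p q x y) x := by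
  classical
  unfold inf2
  by_cases h1 : le2 f p q x y
  · rw [if_pos h1]; exact le2_refl x
  by_cases h2 : le2 f p q y x
  · rwa [if_neg h1, if_pos h2]
  · rw [if_neg h1, if_neg h2]; exact p_le2_bot (incomp2 h1 h2).2.1

lemma inf2_le_right (x y : A) : le2 f p q (inf2 f p q x y) y := by
  classical
  unfold inf2
  by_cases h1 : le2 f p q x y
  · rwa [if_pos h1]
  by_cases h2 : le2 f p q y x
  · rw [if_neg h1, if_pos h2]; exact le2_refl y
  · rw [if_neg h1, if_neg h2]; exact p_le2_bot (incomp2 h1 h2).2.2.1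

lemma le_inf2 {x y z : A} (hzx : le2 f p q z x) (hzy : le2 f p q z y) :
    le2 f p q z (inf2 f p q x y) := by
  classical
  unfold inf2
  by_cases h1 : le2 f p q x y
  · rwa [if_pos h1]
  by_cases h2 : le2 f p q y x
  · rwa [if_neg h1, if_pos h2]
  · rw [if_neg h1, if_neg h2]
    obtain ⟨hExy, hxp, hyp, hxq, hyq⟩ := incomp2 h1 h2
    have hzp : E f z p := by
      by_cases hzx' : E f z x
      · have hzy' : ¬ E f z y := fun h => hExy (E_trans (E_symm hzx') h)
        exact lb2 hzy hzy' hyq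
      · exact lb2 hzx hzx' hxq
    exact le2_p hp hpmax hzp

end

section
include hp hq hpq

lemma sup2_map (x y : A) : f (sup2 f p q x y) = sup2 f p q (f x) (f y) := by
  classical
  unfold sup2
  by_cases h1 : le2 f p q x y
  · rw [if_pos h1, if_pos (le2_mono hp hq h1)]
  by_cases h2 : le2 f p q y x
  · rw [if_neg h1, if_pos h2]
    have h2' := le2_mono hp hq h2
    by_cases h3 : le2 f p q (f x) (f y)
    · rw [if_pos h3]; exact le2_antisymm hpq h3 h2'
    · rw [if_neg h3, if_pos h2']
  · rw [if_neg h1, if_neg h2]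
    obtain ⟨hExy, hxp, hyp, hxq, hyq⟩ := incomp2 h1 h2
    have hf1 : ¬ le2 f p q (f x) (f y) := by
      rintro (h | ⟨hxp', hyp'⟩ | ⟨hyq', hxq'⟩)
      · exact hExy (E_unstep (Cle_E h))
      · exact hxp (E_fix_unstep hp hxp')
      · exact hyq (E_fix_unstep hq hyq')
    have hf2 : ¬ le2 f p q (f y) (f x) := by
      rintro (h | ⟨hyp', hxp'⟩ | ⟨hxq', hyq'⟩)
      · exact hExy (E_symm (E_unstep (Cle_E h)))
      · exact hyp (E_fix_unstep hp hyp')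
      · exact hxq (E_fix_unstep hq hxq')
    rw [if_neg hf1, if_neg hf2]
    exact hq

lemma inf2_map (x y : A) : f (inf2 f p q x y) = inf2 f p q (f x) (f y) := by
  classical
  unfold inf2
  by_cases h1 : le2 f p q x y
  · rw [if_pos h1, if_pos (le2_mono hp hq h1)]
  by_cases h2 : le2 f p q y x
  · rw [if_neg h1, if_pos h2]
    have h2' := le2_mono hp hq h2
    by_cases h3 : le2 f p q (f x) (f y)
    · rw [if_pos h3]; exact le2_antisymm hpq h2' h3
    · rw [if_neg h3, if_pos h2']
  · rw [if_neg h1, if_neg h2]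
    obtain ⟨hExy, hxp, hyp, hxq, hyq⟩ := incomp2 h1 h2
    have hf1 : ¬ le2 f p q (f x) (f y) := by
      rintro (h | ⟨hxp', hyp'⟩ | ⟨hyq', hxq'⟩)
      · exact hExy (E_unstep (Cle_E h))
      · exact hxp (E_fix_unstep hp hxp')
      · exact hyq (E_fix_unstep hq hyq')
    have hf2 : ¬ le2 f p q (f y) (f x) := by
      rintro (h | ⟨hyp', hxp'⟩ | ⟨hxq', hyq'⟩)
      · exact hExy (E_symm (E_unstep (Cle_E h)))
      · exact hyp (E_fix_unstep hp hyp')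
      · exact hxq (E_fix_unstep hq hxq')
    rw [if_neg hf1, if_neg hf2]
    exact hp

end

end Two

lemma case_two {f : A → A} {p q : A} (hpqne : p ≠ q) (hp : f p = p) (hq : f q = q) :
    ∃ L : Lattice A, (∀ x y : A, f (L.sup x y) = L.sup (f x) (f y)) ∧
      (∀ x y : A, f (L.inf x y) = L.inf (f x) (f y)) := by
  classical
  let rank : A → ℕ := fun a => if a = q then 0 else if a = p then 2 else 1
  let r : A → A → Prop := fun a b =>
    rank a < rank b ∨ (rank a = rank b ∧ WellOrderingRel a b)
  haveI : IsTrichotomous A r := by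
    constructor
    intro a b hab hba
    rcases Nat.lt_trichotomy (rank a) (rank b) with h | h | h
    · exact absurd (Or.inl h) hab
    · rcases trichotomous_of WellOrderingRel a b with hw | hw | hw
      · exact absurd (Or.inr ⟨h, hw⟩) hab
      · exact hw
      · exact absurd (Or.inr ⟨h.symm, hw⟩) hba
    · exact absurd (Or.inl h) hba
  haveI : IsIrrefl A r := by
    constructor
    rintro a (h | ⟨-, h⟩)
    · exact lt_irrefl _ h
    · exact irrefl_of WellOrderingRel a h
  haveI : IsTrans A r := by
    constructor
    rintro a b c (h1 | ⟨h1, hw1⟩) (h2 | ⟨h2, hw2⟩)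
    · exact Or.inl (h1.trans h2)
    · exact Or.inl (h2 ▸ h1)
    · exact Or.inl (h1 ▸ h2)
    · exact Or.inr ⟨h1.trans h2, trans_of WellOrderingRel hw1 hw2⟩
  haveI : IsStrictTotalOrder A r := {}
  letI σ : LinearOrder A := linearOrderOfSTO r
  have hqmin : ∀ z : A, z ≠ q → q < z := by
    intro z hz
    show r q z
    refine Or.inl ?_
    simp only [rank]
    split_ifs <;> simp_all
  have hpmax : ∀ z : A, z ≠ p → z < p := by
    intro z hz
    show r z p
    refine Or.inl ?_
    simp only [rank]
    split_ifs <;> simp_all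
  have hpq : ¬ E f p q := by
    rintro ⟨n, hn⟩
    rw [Function.iterate_fixed hp, Function.iterate_fixed hq] at hn
    exact hpqne hn
  let P2 : PartialOrder A :=
    { le := le2 f p q
      lt := fun a b => le2 f p q a b ∧ ¬ le2 f p q b a
      le_refl := le2_refl
      le_trans := fun _ _ _ => le2_trans hpq
      lt_iff_le_not_ge := fun _ _ => Iff.rfl
      le_antisymm := fun _ _ => le2_antisymm hpq }
  refine ⟨{ P2 with
            sup := sup2 f p q
            le_sup_left := le_sup2_left hq hqmin
            le_sup_right := le_sup2_right hq hqmin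
            sup_le := fun x y z => sup2_le hq hqmin
            inf := inf2 f p q
            inf_le_left := inf2_le_left hp hpmax
            inf_le_right := inf2_le_right hp hpmax
            le_inf := fun x y z => le_inf2 hp hpmax },
    sup2_map hp hq hpq, inf2_map hp hq hpq⟩

section One
variable {f : A → A} {x y z : A}

/-- same component of the functional graph -/
def R (f : A → A) (x y : A) : Prop := ∃ a b, f^[a] x = f^[b] y

/-- the class of x comes (weakly) before the class of y along f -/
def Rle (f : A → A) (x y : A) : Prop := ∃ n, E f (f^[n] x) y

lemma E_iter (h : E f x y) (m : ℕ) : E f (f^[m] x) (f^[m] y) := by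
  obtain ⟨n, hn⟩ := h
  refine ⟨n, ?_⟩
  rw [← Function.iterate_add_apply, ← Function.iterate_add_apply]
  exact iter_stable hn (Nat.le_add_right n m)

lemma R_of_E (h : E f x y) : R f x y := by
  obtain ⟨n, hn⟩ := h; exact ⟨n, n, hn⟩

lemma R_refl (f : A → A) (x : A) : R f x x := ⟨0, 0, rfl⟩

lemma R_symm (h : R f x y) : R f y x := by
  obtain ⟨a, b, hab⟩ := h; exact ⟨b, a, hab.symm⟩

lemma R_trans (h1 : R f x y) (h2 : R f y z) : R f x z := by
  obtain ⟨a, b, hab⟩ := h1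
  obtain ⟨c, d, hcd⟩ := h2
  refine ⟨c + a, b + d, ?_⟩
  calc f^[c + a] x = f^[c] (f^[a] x) := Function.iterate_add_apply f c a x
    _ = f^[c] (f^[b] y) := by rw [hab]
    _ = f^[c + b] y := (Function.iterate_add_apply f c b y).symm
    _ = f^[b + c] y := by rw [Nat.add_comm]
    _ = f^[b] (f^[c] y) := Function.iterate_add_apply f b c y
    _ = f^[b] (f^[d] z) := by rw [hcd]
    _ = f^[b + d] z := (Function.iterate_add_apply f b d z).symm

lemma R_fx (f : A → A) (x : A) : R f x (f x) := ⟨1, 0, by simp⟩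

lemma R_step (h : R f x y) : R f (f x) (f y) :=
  R_trans (R_symm (R_fx f x)) (R_trans h (R_fx f y))

lemma R_unstep (h : R f (f x) (f y)) : R f x y :=
  R_trans (R_fx f x) (R_trans h (R_symm (R_fx f y)))

lemma Rle_refl (f : A → A) (x : A) : Rle f x x := ⟨0, E_refl f x⟩

lemma Rle_of_E (h : E f x y) : Rle f x y := ⟨0, h⟩

lemma Rle_R (h : Rle f x y) : R f x y := by
  obtain ⟨n, k, hk⟩ := h
  exact ⟨k + n, k, by rwa [Function.iterate_add_apply]⟩

lemma Rle_total (h : R f x y) : Rle f x y ∨ Rle f y x := by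
  obtain ⟨a, b, hab⟩ := h
  rcases Nat.le_total b a with hba | hab'
  · left
    refine ⟨a - b, b, ?_⟩
    rw [← Function.iterate_add_apply, show b + (a - b) = a by omega]
    exact hab
  · right
    refine ⟨b - a, a, ?_⟩
    rw [← Function.iterate_add_apply, show a + (b - a) = b by omega]
    exact hab.symm

lemma Rle_trans (h1 : Rle f x y) (h2 : Rle f y z) : Rle f x z := by
  obtain ⟨n, h1⟩ := h1
  obtain ⟨m, h2⟩ := h2
  refine ⟨m + n, E_trans ?_ h2⟩
  rw [Function.iterate_add_apply]
  exact E_iter h1 m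

lemma Rle_step (h : Rle f x y) : Rle f (f x) (f y) := by
  obtain ⟨n, hn⟩ := h
  refine ⟨n, ?_⟩
  have he : f^[n] (f x) = f (f^[n] x) := by
    rw [← Function.iterate_succ_apply, Function.iterate_succ_apply']
  rw [he]
  exact E_step hn

lemma Rle_antisymm (hnc : ∀ w m, 1 ≤ m → f^[m] w = w → f w = w)
    (h1 : Rle f x y) (h2 : Rle f y x) : E f x y := by
  obtain ⟨n, k, c1⟩ := h1
  obtain ⟨m, j, c2⟩ := h2
  rw [← Function.iterate_add_apply] at c1 c2
  by_cases h0 : n + m = 0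
  · have hn : n = 0 := by omega
    subst hn
    exact ⟨k, by simpa using c1⟩
  · have d2 : f^[k + (j + m)] y = f^[k + j] x := by
      rw [Function.iterate_add_apply, c2, ← Function.iterate_add_apply]
    have hper : f^[n + m] (f^[k + j] x) = f^[k + j] x := by
      rw [← Function.iterate_add_apply, show (n + m) + (k + j) = m + (j + (k + n)) by omega,
        Function.iterate_add_apply f m (j + (k + n)) x,
        Function.iterate_add_apply f j (k + n) x, c1, ← Function.iterate_add_apply,
        ← Function.iterate_add_apply, show m + j + k = k + (j + m) by omega, d2]
    have hfix : f (f^[k + j] x) = f^[k + j] x := hnc _ (n + m) (by omega) hper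
    refine ⟨m + (k + j), ?_⟩
    have hx : f^[m + (k + j)] x = f^[k + j] x := by
      rw [Function.iterate_add_apply]
      exact Function.iterate_fixed hfix m
    have hy : f^[m + (k + j)] y = f^[k + j] x := by
      rw [show m + (k + j) = k + (j + m) by omega]
      exact d2
    rw [hx, hy]

variable [LinearOrder A] {cord : A → A → Prop}

/-- the global order in the no-proper-cycle case -/
def le1 (f : A → A) (cord : A → A → Prop) (x y : A) : Prop :=
  Cle f x y ∨ (¬ E f x y ∧ Rle f x y) ∨ (¬ R f x y ∧ cord x y)

lemma le1_refl (x : A) : le1 f cord x x := Or.inl (Cle_refl f x)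

lemma le1_total (c1 : ∀ x y, ¬ R f x y → cord x y ∨ cord y x) (x y : A) :
    le1 f cord x y ∨ le1 f cord y x := by
  by_cases hE : E f x y
  · exact (Cle_total hE).imp Or.inl Or.inl
  · have hE' : ¬ E f y x := fun h => hE (E_symm h)
    by_cases hR : R f x y
    · rcases Rle_total hR with h | h
      · exact Or.inl (Or.inr (Or.inl ⟨hE, h⟩))
      · exact Or.inr (Or.inr (Or.inl ⟨hE', h⟩))
    · have hR' : ¬ R f y x := fun h => hR (R_symm h)
      exact (c1 x y hR).imp (fun h => Or.inr (Or.inr ⟨hR, h⟩))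
        (fun h => Or.inr (Or.inr ⟨hR', h⟩))

lemma le1_antisymm (hnc : ∀ w m, 1 ≤ m → f^[m] w = w → f w = w)
    (c2 : ∀ x y, cord x y → cord y x → False)
    (h1 : le1 f cord x y) (h2 : le1 f cord y x) : x = y := by
  rcases h1 with h1 | ⟨hnE1, hRle1⟩ | ⟨hnR1, hc1⟩
  · rcases h2 with h2 | ⟨hnE2, hRle2⟩ | ⟨hnR2, hc2'⟩
    · exact Cle_antisymm h1 h2
    · exact absurd (E_symm (Cle_E h1)) hnE2
    · exact absurd (R_symm (R_of_E (Cle_E h1))) hnR2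
  · rcases h2 with h2 | ⟨hnE2, hRle2⟩ | ⟨hnR2, hc2'⟩
    · exact absurd (E_symm (Cle_E h2)) hnE1
    · exact absurd (Rle_antisymm hnc hRle1 hRle2) hnE1
    · exact absurd (R_symm (Rle_R hRle1)) hnR2
  · rcases h2 with h2 | ⟨hnE2, hRle2⟩ | ⟨hnR2, hc2'⟩
    · exact absurd (R_of_E (E_symm (Cle_E h2))) hnR1
    · exact absurd (R_symm (Rle_R hRle2)) hnR1
    · exact absurd hc2' (fun h => c2 x y hc1 h)

lemma le1_trans (hnc : ∀ w m, 1 ≤ m → f^[m] w = w → f w = w)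
    (c3 : ∀ x y z, cord x y → cord y z → cord x z)
    (c4 : ∀ x y x' y', R f x x' → R f y y' → cord x y → cord x' y')
    (c2 : ∀ x y, cord x y → cord y x → False)
    (h1 : le1 f cord x y) (h2 : le1 f cord y z) : le1 f cord x z := by
  rcases h1 with h1 | ⟨hnE1, hRle1⟩ | ⟨hnR1, hc1⟩
  · rcases h2 with h2 | ⟨hnE2, hRle2⟩ | ⟨hnR2, hc2'⟩
    · exact Or.inl (Cle_trans h1 h2)
    · exact Or.inr (Or.inl ⟨fun h => hnE2 (E_trans (E_symm (Cle_E h1)) h),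
        Rle_trans (Rle_of_E (Cle_E h1)) hRle2⟩)
    · exact Or.inr (Or.inr ⟨fun h => hnR2 (R_trans (R_symm (R_of_E (Cle_E h1))) h),
        c4 y z x z (R_symm (R_of_E (Cle_E h1))) (R_refl f z) hc2'⟩)
  · rcases h2 with h2 | ⟨hnE2, hRle2⟩ | ⟨hnR2, hc2'⟩
    · exact Or.inr (Or.inl ⟨fun h => hnE1 (E_trans h (E_symm (Cle_E h2))),
        Rle_trans hRle1 (Rle_of_E (Cle_E h2))⟩)
    · refine Or.inr (Or.inl ⟨?_, Rle_trans hRle1 hRle2⟩)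
      intro hExz
      exact hnE2 (Rle_antisymm hnc hRle2 (Rle_trans (Rle_of_E (E_symm hExz)) hRle1))
    · exact Or.inr (Or.inr ⟨fun h => hnR2 (R_trans (R_symm (Rle_R hRle1)) h),
        c4 y z x z (R_symm (Rle_R hRle1)) (R_refl f z) hc2'⟩)
  · rcases h2 with h2 | ⟨hnE2, hRle2⟩ | ⟨hnR2, hc2'⟩
    · exact Or.inr (Or.inr ⟨fun h => hnR1 (R_trans h (R_symm (R_of_E (Cle_E h2)))),
        c4 x y x z (R_refl f x) (R_of_E (Cle_E h2)) hc1⟩)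
    · exact Or.inr (Or.inr ⟨fun h => hnR1 (R_trans h (R_symm (Rle_R hRle2))),
        c4 x y x z (R_refl f x) (Rle_R hRle2) hc1⟩)
    · refine Or.inr (Or.inr ⟨?_, c3 x y z hc1 hc2'⟩)
      intro hRxz
      exact c2 x y hc1 (c4 y z y x (R_refl f y) (R_symm hRxz) hc2')

lemma le1_mono (c4 : ∀ x y x' y', R f x x' → R f y y' → cord x y → cord x' y')
    (h : le1 f cord x y) : le1 f cord (f x) (f y) := by
  rcases h with h | ⟨hnE, hRle⟩ | ⟨hnR, hc⟩
  · exact Or.inl (Cle_step h)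
  · exact Or.inr (Or.inl ⟨fun h => hnE (E_unstep h), Rle_step hRle⟩)
  · exact Or.inr (Or.inr ⟨fun h => hnR (R_unstep h), c4 x y (f x) (f y) (R_fx f x) (R_fx f y) hc⟩)

end One

lemma case_one {f : A → A} (hnc : ∀ x m, 1 ≤ m → f^[m] x = x → f x = x) :
    ∃ L : Lattice A, (∀ x y : A, f (L.sup x y) = L.sup (f x) (f y)) ∧
      (∀ x y : A, f (L.inf x y) = L.inf (f x) (f y)) := by
  classical
  letI σ : LinearOrder A := linearOrderOfSTO WellOrderingRel
  let S : Setoid A := ⟨R f, ⟨R_refl f, fun h => R_symm h, fun h1 h2 => R_trans h1 h2⟩⟩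
  letI σQ : LinearOrder (Quotient S) := linearOrderOfSTO WellOrderingRel
  letI : Preorder (Quotient S) := σQ.toPreorder
  let cord : A → A → Prop := fun x y => (Quotient.mk S x) < (Quotient.mk S y)
  have c1 : ∀ x y, ¬ R f x y → cord x y ∨ cord y x := by
    intro x y h
    rcases lt_trichotomy (Quotient.mk S x) (Quotient.mk S y) with hlt | heq | hgt
    · exact Or.inl hlt
    · exact absurd (Quotient.exact heq) h
    · exact Or.inr hgt
  have c2 : ∀ x y, cord x y → cord y x → False := fun x y h1 h2 => absurd h2 (lt_asymm h1)
  have c3 : ∀ x y z, cord x y → cord y z → cord x z := fun _ _ _ h1 h2 => lt_trans h1 h2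
  have c4 : ∀ x y x' y', R f x x' → R f y y' → cord x y → cord x' y' := by
    intro x y x' y' hx hy h
    have e1 : Quotient.mk S x = Quotient.mk S x' := Quotient.sound hx
    have e2 : Quotient.mk S y = Quotient.mk S y' := Quotient.sound hy
    show Quotient.mk S x' < Quotient.mk S y'
    rw [← e1, ← e2]
    exact h
  have htot : ∀ x y, le1 f cord x y ∨ le1 f cord y x := le1_total c1
  let P1 : PartialOrder A :=
    { le := le1 f cord
      lt := fun a b => le1 f cord a b ∧ ¬ le1 f cord b a
      le_refl := le1_refl
      le_trans := fun _ _ _ => le1_trans hnc c3 c4 c2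
      lt_iff_le_not_ge := fun _ _ => Iff.rfl
      le_antisymm := fun _ _ => le1_antisymm hnc c2 }
  refine ⟨{ P1 with
            sup := fun x y => if le1 f cord x y then y else x
            le_sup_left := ?_
            le_sup_right := ?_
            sup_le := ?_
            inf := fun x y => if le1 f cord x y then x else y
            inf_le_left := ?_
            inf_le_right := ?_
            le_inf := ?_ }, ?_, ?_⟩
  · intro x y
    show le1 f cord x (if le1 f cord x y then y else x)
    by_cases h : le1 f cord x y
    · rwa [if_pos h]
    · rw [if_neg h]; exact le1_refl x
  · intro x y
    show le1 f cord y (if le1 f cord x y then y else x)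
    by_cases h : le1 f cord x y
    · rw [if_pos h]; exact le1_refl y
    · rw [if_neg h]; exact (htot x y).resolve_left h
  · intro x y z hxz hyz
    show le1 f cord (if le1 f cord x y then y else x) z
    by_cases h : le1 f cord x y
    · rwa [if_pos h]
    · rwa [if_neg h]
  · intro x y
    show le1 f cord (if le1 f cord x y then x else y) x
    by_cases h : le1 f cord x y
    · rw [if_pos h]; exact le1_refl x
    · rw [if_neg h]; exact (htot x y).resolve_left h
  · intro x y
    show le1 f cord (if le1 f cord x y then x else y) y
    by_cases h : le1 f cord x y
    · rwa [if_pos h]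
    · rw [if_neg h]; exact le1_refl y
  · intro z x y hzx hzy
    show le1 f cord z (if le1 f cord x y then x else y)
    by_cases h : le1 f cord x y
    · rwa [if_pos h]
    · rwa [if_neg h]
  · intro x y
    show f (if le1 f cord x y then y else x) =
      (if le1 f cord (f x) (f y) then f y else f x)
    by_cases h1 : le1 f cord x y
    · rw [if_pos h1, if_pos (le1_mono c4 h1)]
    · rw [if_neg h1]
      have h2 : le1 f cord y x := (htot x y).resolve_left h1
      have h2' := le1_mono c4 h2
      by_cases h3 : le1 f cord (f x) (f y)
      · rw [if_pos h3]; exact le1_antisymm hnc c2 h3 h2'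
      · rw [if_neg h3]
  · intro x y
    show f (if le1 f cord x y then x else y) =
      (if le1 f cord (f x) (f y) then f x else f y)
    by_cases h1 : le1 f cord x y
    · rw [if_pos h1, if_pos (le1_mono c4 h1)]
    · rw [if_neg h1]
      have h2 : le1 f cord y x := (htot x y).resolve_left h1
      have h2' := le1_mono c4 h2
      by_cases h3 : le1 f cord (f x) (f y)
      · rw [if_pos h3]; exact le1_antisymm hnc c2 h2' h3
      · rw [if_neg h3]

lemma forward {f : A → A} (L : Lattice A)
    (hsup : ∀ x y : A, f (L.sup x y) = L.sup (f x) (f y))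
    (hinf : ∀ x y : A, f (L.inf x y) = L.inf (f x) (f y))
    {x : A} {m : ℕ} (hm : 1 ≤ m) (hx : f^[m] x = x) (hfx : f x ≠ x) :
    ∃ p q : A, p ≠ q ∧ f p = p ∧ f q = q := by
  letI := L
  have hm2 : 2 ≤ m := by
    have : m ≠ 1 := fun h => hfx (by simpa [h] using hx)
    omega
  have hne : (Finset.range m).Nonempty := ⟨0, Finset.mem_range.mpr (by omega)⟩
  let F : SupHom A A := ⟨f, fun a b => hsup a b⟩
  let G : InfHom A A := ⟨f, fun a b => hinf a b⟩
  set u := (Finset.range m).sup' hne (fun i => f^[i] x) with hu_def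
  set v := (Finset.range m).inf' hne (fun i => f^[i] x) with hv_def
  have hu : f u = u := by
    have h1 : f u = (Finset.range m).sup' hne (fun i => f (f^[i] x)) :=
      map_finset_sup' F hne (fun i => f^[i] x)
    rw [h1]
    simp only [← Function.iterate_succ_apply']
    apply le_antisymm
    · apply Finset.sup'_le
      intro i hi
      rcases Nat.lt_or_ge (i + 1) m with h | h
      · exact Finset.le_sup' (f := fun i => f^[i] x) (Finset.mem_range.mpr h)
      · have him : i + 1 = m := by
          have := Finset.mem_range.mp hi; omega
        have heq : f^[i + 1] x = f^[0] x := by simp [him, hx]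
        rw [heq]
        exact Finset.le_sup' (f := fun i => f^[i] x) (Finset.mem_range.mpr (by omega))
    · apply Finset.sup'_le
      intro i hi
      rcases Nat.eq_zero_or_pos i with rfl | hi0
      · have heq : f^[0] x = f^[(m - 1) + 1] x := by
          rw [show (m - 1) + 1 = m by omega, hx]; simp
        rw [heq]
        exact Finset.le_sup' (f := fun i => f^[i + 1] x) (Finset.mem_range.mpr (by omega))
      · have heq : f^[i] x = f^[(i - 1) + 1] x := by rw [show (i - 1) + 1 = i by omega]
        rw [heq]
        have := Finset.mem_range.mp hi
        exact Finset.le_sup' (f := fun i => f^[i + 1] x) (Finset.mem_range.mpr (by omega))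
  have hv : f v = v := by
    have h1 : f v = (Finset.range m).inf' hne (fun i => f (f^[i] x)) :=
      map_finset_inf' G hne (fun i => f^[i] x)
    rw [h1]
    simp only [← Function.iterate_succ_apply']
    apply le_antisymm
    · apply Finset.le_inf'
      intro i hi
      rcases Nat.eq_zero_or_pos i with rfl | hi0
      · have heq : f^[0] x = f^[(m - 1) + 1] x := by
          rw [show (m - 1) + 1 = m by omega, hx]; simp
        rw [heq]
        exact Finset.inf'_le (f := fun i => f^[i + 1] x) (Finset.mem_range.mpr (by omega))
      · have heq : f^[i] x = f^[(i - 1) + 1] x := by rw [show (i - 1) + 1 = i by omega]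
        rw [heq]
        have := Finset.mem_range.mp hi
        exact Finset.inf'_le (f := fun i => f^[i + 1] x) (Finset.mem_range.mpr (by omega))
    · apply Finset.le_inf'
      intro i hi
      rcases Nat.lt_or_ge (i + 1) m with h | h
      · exact Finset.inf'_le (f := fun i => f^[i] x) (Finset.mem_range.mpr h)
      · have him : i + 1 = m := by
          have := Finset.mem_range.mp hi; omega
        have heq : f^[i + 1] x = f^[0] x := by simp [him, hx]
        rw [heq]
        exact Finset.inf'_le (f := fun i => f^[i] x) (Finset.mem_range.mpr (by omega))
  refine ⟨u, v, ?_, hu, hv⟩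
  intro huv
  have h1 : x ≤ u := by
    have : f^[0] x ≤ u :=
      Finset.le_sup' (f := fun i => f^[i] x) (Finset.mem_range.mpr (by omega))
    simpa using this
  have h2 : v ≤ x := by
    have : v ≤ f^[0] x :=
      Finset.inf'_le (f := fun i => f^[i] x) (Finset.mem_range.mpr (by omega))
    simpa using this
  have h3 : f x ≤ u := by
    have : f^[1] x ≤ u :=
      Finset.le_sup' (f := fun i => f^[i] x) (Finset.mem_range.mpr (by omega))
    simpa using this
  have h4 : v ≤ f x := by
    have : v ≤ f^[1] x :=
      Finset.inf'_le (f := fun i => f^[i] x) (Finset.mem_range.mpr (by omega))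
    simpa using this
  have hxu : x = u := le_antisymm h1 (huv ▸ h2)
  have hfxu : f x = u := le_antisymm h3 (huv ▸ h4)
  exact hfx (hfxu.trans hxu.symm)

end Stmt16Aux

theorem stmt16 {A : Type*} (f : A → A) :
    (∃ L : Lattice A,
      (∀ x y : A, f (L.sup x y) = L.sup (f x) (f y)) ∧
      (∀ x y : A, f (L.inf x y) = L.inf (f x) (f y))) ↔
    ((∀ (x : A) (m : ℕ), 1 ≤ m → f^[m] x = x → f x = x) ∨
      ∃ p q : A, p ≠ q ∧ f p = p ∧ f q = q) := by
  constructor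
  · rintro ⟨L, hsup, hinf⟩
    by_cases h : ∀ (x : A) (m : ℕ), 1 ≤ m → f^[m] x = x → f x = x
    · exact Or.inl h
    · push_neg at h
      obtain ⟨x, m, hm, hx, hfx⟩ := h
      exact Or.inr (Stmt16Aux.forward L hsup hinf hm hx hfx)
  · rintro (h | ⟨p, q, hpq, hp, hq⟩)
    · exact Stmt16Aux.case_one h
    · exact Stmt16Aux.case_two hpq hp hq
end

section
/- Let A = {p, q, x₁, …, xₙ} with n ≥ 3 distinct elements, and f : A → A defined by f(p) = p, f(q) = q, f(xᵢ) = xᵢ₊₁ for 1 ≤ i ≤ n−1, and f(xₙ) = x₁. Then there is no distributive lattice structure on A making f a lattice endomorphism. -/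
theorem stmt17 {A : Type*} (n : ℕ) (hn : 3 ≤ n) (p q : A) (x : Fin n → A)
    (hpq : p ≠ q) (hinj : Function.Injective x)
    (hpx : ∀ i : Fin n, p ≠ x i) (hqx : ∀ i : Fin n, q ≠ x i)
    (hcover : ∀ a : A, a = p ∨ a = q ∨ ∃ i : Fin n, a = x i)
    (f : A → A) (hp : f p = p) (hq : f q = q)
    (hx : ∀ i : Fin n, f (x i) = x (i + ⟨1, by omega⟩)) :
    ¬ ∃ D : DistribLattice A,
      (∀ a b : A, f (D.sup a b) = D.sup (f a) (f b)) ∧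
      (∀ a b : A, f (D.inf a b) = D.inf (f a) (f b)) := by
  rintro ⟨D, hsupf, hinff⟩
  letI : DistribLattice A := D
  haveI : NeZero n := ⟨by omega⟩
  letI : CommRing (Fin n) := Fin.instCommRing n
  have hsup : ∀ a b : A, f (a ⊔ b) = f a ⊔ f b := hsupf
  have hinf : ∀ a b : A, f (a ⊓ b) = f a ⊓ f b := hinff
  -- rewrite hx with Fin numeral 1
  have hv1 : (1 : Fin n).val = 1 := by
    rw [Fin.val_one']; exact Nat.mod_eq_of_lt (by omega)
  have hone : (⟨1, by omega⟩ : Fin n) = 1 := by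
    apply Fin.ext; rw [hv1]
  have hx1 : ∀ i : Fin n, f (x i) = x (i + 1) := by
    intro i; rw [hx]; rw [hone]
  -- monotonicity of f
  have hmono : ∀ a b : A, a ≤ b → f a ≤ f b := by
    intro a b hab
    have h := hsup a b
    rw [sup_eq_right.mpr hab] at h
    calc f a ≤ f a ⊔ f b := le_sup_left
      _ = f b := h.symm
  -- shift a ≤ inequality by a natural number
  have shift : ∀ (k : ℕ) (a b : Fin n), x a ≤ x b → x (a + (k : Fin n)) ≤ x (b + (k : Fin n)) := by
    intro k
    induction k with
    | zero => intro a b h; simpa using h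
    | succ m ih =>
        intro a b h
        have h' := hmono _ _ (ih a b h)
        rw [hx1, hx1] at h'
        have e : ∀ c : Fin n, c + (m : Fin n) + 1 = c + ((m + 1 : ℕ) : Fin n) := by
          intro c; push_cast; ring
        rw [e a, e b] at h'
        exact h'
  -- the x's form an antichain
  have key : ∀ i j : Fin n, x i ≤ x j → i = j := by
    intro i j hij
    by_contra hne
    set d : Fin n := j - i with hd
    have hj : j = i + d := by rw [hd]; ring
    have chain : ∀ m : ℕ, x i ≤ x (i + (m : Fin n) * d) := by
      intro m
      induction m with
      | zero => simpa using le_refl (x i)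
      | succ m ih =>
          have h1 := shift ((m : Fin n) * d).val i j hij
          rw [Fin.cast_val_eq_self] at h1
          have e1 : j + (m : Fin n) * d = i + ((m + 1 : ℕ) : Fin n) * d := by
            rw [hj]; push_cast; ring
          rw [e1] at h1
          exact le_trans ih h1
    have hlast := chain (n - 1)
    have hsub : ((n - 1 : ℕ) : Fin n) = -1 := by
      have : ((n - 1 : ℕ) : Fin n) = (n : Fin n) - 1 := by
        push_cast [Nat.cast_sub (by omega : 1 ≤ n)]; ring
      rw [this, Fin.natCast_self]; ring
    rw [hsub] at hlast
    have h2 := shift d.val i (i + (-1) * d) hlast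
    rw [Fin.cast_val_eq_self] at h2
    have e2 : i + (-1) * d + d = i := by ring
    have e3 : i + d = j := hj.symm
    rw [e2, e3] at h2
    have : x i = x j := le_antisymm hij h2
    exact hne (hinj this)
  -- pairwise sups and infs of distinct x's lie in {p, q}
  have hsupxx : ∀ i j : Fin n, i ≠ j → x i ⊔ x j = p ∨ x i ⊔ x j = q := by
    intro i j hij
    rcases hcover (x i ⊔ x j) with h | h | ⟨k, h⟩
    · exact Or.inl h
    · exact Or.inr h
    · exfalso
      have h1 : x i ≤ x k := h ▸ le_sup_left
      have h2 : x j ≤ x k := h ▸ le_sup_right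
      exact hij ((key i k h1).trans (key j k h2).symm)
  have hinfxx : ∀ i j : Fin n, i ≠ j → x i ⊓ x j = p ∨ x i ⊓ x j = q := by
    intro i j hij
    rcases hcover (x i ⊓ x j) with h | h | ⟨k, h⟩
    · exact Or.inl h
    · exact Or.inr h
    · exfalso
      have h1 : x k ≤ x i := h ▸ inf_le_left
      have h2 : x k ≤ x j := h ▸ inf_le_right
      exact hij ((key k i h1).symm.trans (key k j h2))
  -- indices 0, 1, 2
  set i0 : Fin n := ⟨0, by omega⟩
  set i1 : Fin n := ⟨1, by omega⟩
  set i2 : Fin n := ⟨2, by omega⟩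
  have e01 : i0 + 1 = i1 := by
    apply Fin.ext; rw [Fin.add_def, hv1]
    show (0 + 1) % n = 1
    rw [Nat.mod_eq_of_lt (by omega)]
  have e12 : i1 + 1 = i2 := by
    apply Fin.ext; rw [Fin.add_def, hv1]
    show (1 + 1) % n = 2
    rw [Nat.mod_eq_of_lt (by omega)]
  have ne01 : i0 ≠ i1 := by simp [i0, i1, Fin.ext_iff]
  have ne12 : i1 ≠ i2 := by simp [i1, i2, Fin.ext_iff]
  have ne02 : i0 ≠ i2 := by simp [i0, i2, Fin.ext_iff]
  -- f fixes p and q, hence fixes any element of {p,q}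
  have ffix : ∀ a : A, (a = p ∨ a = q) → f a = a := by
    rintro a (rfl | rfl); exacts [hp, hq]
  set s := x i0 ⊔ x i1 with hs
  set t := x i0 ⊓ x i1 with ht
  have hspq := hsupxx i0 i1 ne01
  have htpq := hinfxx i0 i1 ne01
  have fs : x i1 ⊔ x i2 = s := by
    have := hsup (x i0) (x i1)
    rw [hx1, hx1, e01, e12, ffix s hspq] at this
    exact this.symm
  have ftx : x i1 ⊓ x i2 = t := by
    have := hinf (x i0) (x i1)
    rw [hx1, hx1, e01, e12, ffix t htpq] at this
    exact this.symm
  -- x0 ≤ s and t ≤ x0, and x0 ∉ {p,q}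
  have hx0s : x i0 ≤ s := le_sup_left
  have hx0pq : x i0 ≠ p ∧ x i0 ≠ q := ⟨fun h => hpx i0 h.symm, fun h => hqx i0 h.symm⟩
  have hst : s ≠ t := by
    intro h
    have h1 : x i0 ≤ t := h ▸ hx0s
    have h2 : x i0 = t := le_antisymm h1 inf_le_left
    rcases htpq with h' | h'
    · exact hx0pq.1 (h2.trans h')
    · exact hx0pq.2 (h2.trans h')
  set u := x i0 ⊓ x i2 with hu
  have hupq := hinfxx i0 i2 ne02
  have hus : u ≠ s := by
    intro h
    have h1 : s ≤ x i0 := h ▸ inf_le_left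
    have h2 : x i0 = s := le_antisymm hx0s h1
    rcases hspq with h' | h'
    · exact hx0pq.1 (h2.trans h')
    · exact hx0pq.2 (h2.trans h')
  have hut : u = t := by
    rcases hupq with h1 | h1 <;> rcases hspq with h2 | h2 <;> rcases htpq with h3 | h3 <;>
      first
        | (exact h1.trans h3.symm)
        | (exact absurd (h1.trans h2.symm) hus)
        | (exact absurd (h2.trans h3.symm) hst)
        | (exact absurd rfl hpq)
  -- final contradiction via distributivity
  have final : x i0 = t := by
    have h1 : x i0 ⊓ (x i1 ⊔ x i2) = x i0 := by
      rw [fs]; exact inf_eq_left.mpr hx0s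
    rw [← h1, inf_sup_left, ← ht, ← hu, hut, sup_idem]
  rcases htpq with h | h
  · exact hx0pq.1 (final.trans h)
  · exact hx0pq.2 (final.trans h)
end
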